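/- arXiv:1307.0879 — 8 statements merged into one kernel-verified Lean document; each statement's English description precedes it below -/
import Mathlib

section
/- For a prime power q ≥ 2 and |u| < q, the infinite product ∏_{i≥1} (1 - u/q^i) equals the sum ∑_{j≥0} (-u)^j / ((q^j - 1)(q^{j-1} - 1) ⋯ (q - 1)). -/
open Finset Filter Topology

noncomputable def eulerC (q : ℝ) (j : ℕ) : ℝ := ∏ k ∈ Finset.Icc 1 j, (q ^ k - 1)

lemma eulerC_zero (q : ℝ) : eulerC q 0 = 1 := by simp [eulerC]

lemma eulerC_succ (q : ℝ) (j : ℕ) :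
    eulerC q (j + 1) = eulerC q j * (q ^ (j + 1) - 1) := by
  rw [eulerC, eulerC, Finset.prod_Icc_succ_top (by omega)]

lemma one_le_factor {q : ℝ} (hq : 2 ≤ q) {k : ℕ} (hk : 1 ≤ k) : 1 ≤ q ^ k - 1 := by
  have h := le_self_pow₀ (by linarith : (1:ℝ) ≤ q) (by omega : k ≠ 0)
  linarith

lemma one_le_eulerC {q : ℝ} (hq : 2 ≤ q) (j : ℕ) : 1 ≤ eulerC q j := by
  induction j with
  | zero => rw [eulerC_zero]
  | succ j ih =>
    rw [eulerC_succ]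
    have h := one_le_factor hq (k := j + 1) (by omega)
    nlinarith

lemma eulerC_pos {q : ℝ} (hq : 2 ≤ q) (j : ℕ) : 0 < eulerC q j :=
  lt_of_lt_of_le one_pos (one_le_eulerC hq j)

lemma eulerC_le_succ {q : ℝ} (hq : 2 ≤ q) (j : ℕ) : eulerC q j ≤ eulerC q (j + 1) := by
  rw [eulerC_succ]
  exact le_mul_of_one_le_right (eulerC_pos hq j).le (one_le_factor hq (by omega))

lemma summable_euler_abs {q : ℝ} (hq : 2 ≤ q) (v : ℝ) :
    Summable (fun j : ℕ => |v| ^ j / eulerC q j) := by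
  have h1 : (1:ℝ) < q := by linarith
  apply summable_of_ratio_norm_eventually_le (r := 1/2) (by norm_num)
  have hev : ∀ᶠ j : ℕ in atTop, 2 * |v| + 1 ≤ q ^ (j + 1) := by
    have h := (tendsto_pow_atTop_atTop_of_one_lt h1).eventually_ge_atTop (2 * |v| + 1)
    exact (tendsto_add_atTop_nat 1).eventually h
  filter_upwards [hev] with j hj
  have hc := eulerC_pos hq j
  have hf : (0:ℝ) < q ^ (j + 1) - 1 := by
    have := one_le_factor hq (k := j+1) (by omega); linarith
  have e1 : ‖|v| ^ (j+1) / eulerC q (j+1)‖ = |v| ^ (j+1) / eulerC q (j+1) :=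
    Real.norm_of_nonneg (div_nonneg (by positivity) (eulerC_pos hq _).le)
  have e2 : ‖|v| ^ j / eulerC q j‖ = |v| ^ j / eulerC q j :=
    Real.norm_of_nonneg (div_nonneg (by positivity) (eulerC_pos hq _).le)
  rw [e1, e2, eulerC_succ, pow_succ]
  have h2 : |v| / (q ^ (j + 1) - 1) ≤ 1 / 2 := by
    rw [div_le_div_iff₀ hf (by norm_num)]
    linarith
  calc |v| ^ j * |v| / (eulerC q j * (q ^ (j + 1) - 1))
      = (|v| ^ j / eulerC q j) * (|v| / (q ^ (j + 1) - 1)) := by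
        rw [mul_div_mul_comm]
    _ ≤ (|v| ^ j / eulerC q j) * (1 / 2) :=
        mul_le_mul_of_nonneg_left h2 (by positivity)
    _ = 1 / 2 * (|v| ^ j / eulerC q j) := by ring

lemma summable_euler {q : ℝ} (hq : 2 ≤ q) (v : ℝ) :
    Summable (fun j : ℕ => (-v) ^ j / eulerC q j) := by
  rw [← summable_abs_iff]
  refine (summable_euler_abs hq v).congr fun j => ?_
  rw [abs_div, abs_pow, abs_neg, abs_of_pos (eulerC_pos hq j)]

noncomputable def eulerS (q v : ℝ) : ℝ := ∑' j : ℕ, (-v) ^ j / eulerC q j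

lemma eulerS_funeq {q : ℝ} (hq : 2 ≤ q) (u : ℝ) :
    eulerS q u = (1 - u / q) * eulerS q (u / q) := by
  have hq0 : (0:ℝ) < q := by linarith
  have hs := summable_euler hq (u / q)
  have hs1 : Summable (fun j : ℕ => (-(u/q)) ^ (j+1) / eulerC q (j+1)) :=
    (summable_nat_add_iff (f := fun j : ℕ => (-(u/q)) ^ j / eulerC q j) 1).mpr hs
  have hsu := summable_euler hq u
  have hsu1 : Summable (fun j : ℕ => (-u) ^ (j+1) / eulerC q (j+1)) :=
    (summable_nat_add_iff (f := fun j : ℕ => (-u) ^ j / eulerC q j) 1).mpr hsu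
  have hs2 : Summable (fun j : ℕ => (u/q) * ((-(u/q)) ^ j / eulerC q j)) := hs.mul_left _
  have hterm : ∀ j : ℕ,
      (-(u/q)) ^ (j+1) / eulerC q (j+1) - (u/q) * ((-(u/q)) ^ j / eulerC q j)
        = (-u) ^ (j+1) / eulerC q (j+1) := by
    intro j
    have hc0 : eulerC q j ≠ 0 := (eulerC_pos hq j).ne'
    have hf0 : q ^ (j+1) - 1 ≠ 0 := by
      have := one_le_factor hq (k := j+1) (by omega); linarith
    have hq0' : q ≠ 0 := hq0.ne'
    have e : ∀ k : ℕ, (-(u/q)) ^ k = (-u) ^ k / q ^ k := fun k => by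
      rw [← neg_div, div_pow]
    rw [eulerC_succ, e, e]
    field_simp
    ring
  have expand : eulerS q u = 1 + ∑' j : ℕ, (-u) ^ (j+1) / eulerC q (j+1) := by
    rw [eulerS, Summable.tsum_eq_zero_add hsu]
    simp [eulerC_zero]
  have hA : eulerS q (u/q) = 1 + ∑' j : ℕ, (-(u/q)) ^ (j+1) / eulerC q (j+1) := by
    rw [eulerS, Summable.tsum_eq_zero_add hs]
    simp [eulerC_zero]
  have hB : (u/q) * eulerS q (u/q) = ∑' j : ℕ, (u/q) * ((-(u/q)) ^ j / eulerC q j) := by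
    rw [eulerS, tsum_mul_left]
  have hC : (∑' j : ℕ, (-(u/q)) ^ (j+1) / eulerC q (j+1))
      - ∑' j : ℕ, (u/q) * ((-(u/q)) ^ j / eulerC q j)
      = ∑' j : ℕ, (-u) ^ (j+1) / eulerC q (j+1) := by
    rw [← Summable.tsum_sub hs1 hs2]
    exact tsum_congr hterm
  rw [expand, sub_mul, one_mul, hB, hA]
  linarith [hC]

lemma eulerS_iter {q : ℝ} (hq : 2 ≤ q) (u : ℝ) (N : ℕ) :
    eulerS q u = (∏ i ∈ Finset.range N, (1 - u / q ^ (i+1))) * eulerS q (u / q ^ N) := by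
  induction N with
  | zero => simp
  | succ N ih =>
    rw [Finset.prod_range_succ]
    have h := eulerS_funeq hq (u / q ^ N)
    rw [div_div, ← pow_succ] at h
    rw [ih, h]
    ring

lemma eulerS_tail {q : ℝ} (hq : 2 ≤ q) {u v : ℝ} (hv : |v| ≤ |u|) :
    |eulerS q v - 1| ≤ |v| * ∑' j : ℕ, |u| ^ j / eulerC q j := by
  have hsv := summable_euler hq v
  have hsv1 : Summable (fun j : ℕ => (-v) ^ (j+1) / eulerC q (j+1)) :=
    (summable_nat_add_iff (f := fun j : ℕ => (-v) ^ j / eulerC q j) 1).mpr hsv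
  have h0 : eulerS q v - 1 = ∑' j : ℕ, (-v) ^ (j+1) / eulerC q (j+1) := by
    rw [eulerS, Summable.tsum_eq_zero_add hsv]
    simp [eulerC_zero]
  rw [h0]
  have habs : Summable (fun j : ℕ => |(-v) ^ (j+1) / eulerC q (j+1)|) := hsv1.abs
  have hn : Summable (fun j : ℕ => ‖(-v) ^ (j+1) / eulerC q (j+1)‖) := by
    simpa only [Real.norm_eq_abs] using habs
  calc |∑' j : ℕ, (-v) ^ (j+1) / eulerC q (j+1)|
      ≤ ∑' j : ℕ, |(-v) ^ (j+1) / eulerC q (j+1)| := by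
        simpa only [Real.norm_eq_abs] using
          norm_tsum_le_tsum_norm (f := fun j : ℕ => (-v) ^ (j+1) / eulerC q (j+1)) hn
    _ ≤ ∑' j : ℕ, |v| * (|u| ^ j / eulerC q j) := by
        apply Summable.tsum_le_tsum _ habs ((summable_euler_abs hq u).mul_left _)
        intro j
        rw [abs_div, abs_pow, abs_neg, abs_of_pos (eulerC_pos hq (j+1)), pow_succ,
          mul_comm (|v| ^ j) (|v|), ← mul_div_assoc]
        apply div_le_div₀ (by positivity) _ (eulerC_pos hq j) (eulerC_le_succ hq j)
        exact mul_le_mul_of_nonneg_left (pow_le_pow_left₀ (abs_nonneg v) hv j) (abs_nonneg v)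
    _ = |v| * ∑' j : ℕ, |u| ^ j / eulerC q j := tsum_mul_left

lemma eulerS_tendsto {q : ℝ} (hq : 2 ≤ q) (u : ℝ) :
    Tendsto (fun N : ℕ => eulerS q (u / q ^ N)) atTop (𝓝 1) := by
  have hq0 : (0:ℝ) < q := by linarith
  set C := ∑' j : ℕ, |u| ^ j / eulerC q j with hC
  have hC0 : 0 ≤ C := tsum_nonneg fun j => div_nonneg (by positivity) (eulerC_pos hq j).le
  have hb : ∀ N : ℕ, |eulerS q (u / q ^ N) - 1| ≤ (|u| * C) * (1/q) ^ N := by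
    intro N
    have hp : (0:ℝ) < q ^ N := pow_pos hq0 N
    have h1 : (1:ℝ) ≤ q ^ N := one_le_pow₀ (by linarith)
    have habs : |u / q ^ N| = |u| / q ^ N := by
      rw [abs_div, abs_of_pos hp]
    have hle : |u / q ^ N| ≤ |u| := by
      rw [habs]; exact div_le_self (abs_nonneg u) h1
    calc |eulerS q (u / q ^ N) - 1| ≤ |u / q ^ N| * C := eulerS_tail hq hle
      _ = (|u| * C) * (1/q) ^ N := by
          rw [habs, div_pow, one_pow, div_eq_mul_inv, div_eq_mul_inv]
          ring
  have h3 : Tendsto (fun N : ℕ => (|u| * C) * (1/q) ^ N) atTop (𝓝 0) := by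
    have hg : Tendsto (fun N : ℕ => (1/q) ^ N) atTop (𝓝 0) :=
      tendsto_pow_atTop_nhds_zero_of_lt_one (by positivity)
        (by rw [div_lt_one hq0]; linarith)
    simpa using hg.const_mul (|u| * C)
  have h4 : Tendsto (fun N : ℕ => |eulerS q (u / q ^ N) - 1|) atTop (𝓝 0) :=
    squeeze_zero (fun N => abs_nonneg _) hb h3
  rw [tendsto_iff_norm_sub_tendsto_zero]
  simpa using h4

lemma euler_multipliable {q u : ℝ} (hq : 2 ≤ q) (hu : |u| < q) :
    Multipliable (fun i : ℕ => 1 - u / q ^ (i + 1)) := by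
  have hq0 : (0:ℝ) < q := by linarith
  set m := 1 - |u| / q with hm
  have hm0 : 0 < m := by rw [hm, sub_pos, div_lt_one hq0]; exact hu
  have hm1 : m ≤ 1 := by
    have : 0 ≤ |u| / q := by positivity
    rw [hm]; linarith
  have hkey : ∀ n : ℕ, m ≤ 1 - u / q ^ (n + 1) := by
    intro n
    have hps : q ≤ q ^ (n+1) := le_self_pow₀ (by linarith) (by omega)
    have h1 : |u| / q ^ (n+1) ≤ |u| / q :=
      div_le_div_of_nonneg_left (abs_nonneg u) hq0 hps
    have h2 : u / q ^ (n+1) ≤ |u| / q ^ (n+1) :=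
      (div_le_div_iff_of_pos_right (by positivity)).mpr (le_abs_self u)
    rw [hm]; linarith
  have hpos : ∀ n : ℕ, (0:ℝ) < 1 - u / q ^ (n + 1) :=
    fun n => lt_of_lt_of_le hm0 (hkey n)
  have hlog : ∀ n : ℕ, |Real.log (1 - u / q ^ (n+1))| ≤ (|u| / q ^ (n+1)) / m := by
    intro n
    set y := 1 - u / q ^ (n+1) with hy
    have hym : m ≤ y := hkey n
    have hy0 : 0 < y := hpos n
    have hxy : |y - 1| = |u| / q ^ (n+1) := by
      rw [hy]
      rw [show 1 - u / q ^ (n+1) - 1 = -(u / q ^ (n+1)) by ring, abs_neg, abs_div,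
        abs_of_pos (pow_pos hq0 (n+1))]
    rw [← hxy]
    rcases le_or_gt 1 y with h | h
    · rw [abs_of_nonneg (Real.log_nonneg h), abs_of_nonneg (by linarith)]
      have := Real.log_le_sub_one_of_pos hy0
      calc Real.log y ≤ y - 1 := this
        _ ≤ (y - 1) / m := le_div_self (by linarith) hm0 hm1
    · rw [abs_of_neg (Real.log_neg hy0 h), abs_of_neg (by linarith)]
      have h3 : Real.log y⁻¹ ≤ y⁻¹ - 1 := Real.log_le_sub_one_of_pos (inv_pos.mpr hy0)
      rw [Real.log_inv] at h3
      have h4 : y⁻¹ - 1 = (1 - y) / y := by field_simp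
      have h5 : (1 - y) / y ≤ (1 - y) / m :=
        div_le_div_of_nonneg_left (by linarith) hm0 hym
      rw [h4] at h3
      calc -Real.log y ≤ (1 - y) / y := h3
        _ ≤ (1 - y) / m := h5
        _ = -(y - 1) / m := by ring
  have hgeom : Summable (fun n : ℕ => (|u| / q ^ (n+1)) / m) := by
    have hg : Summable (fun n : ℕ => (1/q) ^ n) :=
      summable_geometric_of_lt_one (by positivity) (by rw [div_lt_one hq0]; linarith)
    refine ((hg.mul_left (|u| / (m * q))).congr fun n => ?_)
    rw [div_pow, one_pow, pow_succ, div_div, div_mul_div_comm, mul_one]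
    congr 1
    ring
  have hsumlog : Summable (fun n : ℕ => Real.log (1 - u / q ^ (n+1))) :=
    summable_abs_iff.mp (Summable.of_nonneg_of_le (fun n => abs_nonneg _) hlog hgeom)
  exact Real.multipliable_of_summable_log hpos hsumlog

/-- Euler's identity: for `q ≥ 2` and `|u| < q`,
`∏_{i ≥ 1} (1 - u/q^i) = ∑_{j ≥ 0} (-u)^j / ((q^j - 1) ⋯ (q - 1))`. -/
theorem euler_identity_product (q u : ℝ) (hq : 2 ≤ q) (hu : |u| < q) :
    (∏' i : ℕ, (1 - u / q ^ (i + 1))) =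
      ∑' j : ℕ, (-u) ^ j / ∏ k ∈ Finset.Icc 1 j, (q ^ k - 1) := by
  have hM := euler_multipliable hq hu
  have h1 : Tendsto (fun N : ℕ => ∏ i ∈ Finset.range N, (1 - u / q ^ (i + 1))) atTop
      (𝓝 (∏' i : ℕ, (1 - u / q ^ (i + 1)))) := hM.hasProd.tendsto_prod_nat
  have h2 := eulerS_tendsto hq u
  have h3 := h1.mul h2
  have h4 : (fun N : ℕ => (∏ i ∈ Finset.range N, (1 - u / q ^ (i + 1)))
      * eulerS q (u / q ^ N)) = fun _ : ℕ => eulerS q u :=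
    funext fun N => (eulerS_iter hq u N).symm
  rw [h4] at h3
  have h5 := tendsto_nhds_unique h3 tendsto_const_nhds
  rw [mul_one] at h5
  rw [h5]
  rfl
end

section
/- For any real q ≥ 2, the infinite product ∏_{i≥1} (1 - 1/q^i)^{-1} is at most 3.5. -/
/-- Weierstrass-type inequality: `∏ (1 - xᵢ) ≥ 1 - ∑ xᵢ`. -/
lemma weier_aux (x : ℕ → ℝ) (h0 : ∀ i, 0 ≤ x i) (h1 : ∀ i, x i ≤ 1) :
    ∀ n, 1 - ∑ i ∈ Finset.range n, x i ≤ ∏ i ∈ Finset.range n, (1 - x i) := by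
  intro n
  induction n with
  | zero => simp
  | succ n ih =>
    rw [Finset.sum_range_succ, Finset.prod_range_succ]
    have hP : 0 ≤ ∏ i ∈ Finset.range n, (1 - x i) :=
      Finset.prod_nonneg fun i _ => by linarith [h1 i]
    have hS : 0 ≤ ∑ i ∈ Finset.range n, x i :=
      Finset.sum_nonneg fun i _ => h0 i
    nlinarith [h0 n, h1 n, ih]

/-- For `q ≥ 2`, `∏_{i ≥ 1} (1 - 1/q^i)^{-1} ≤ 3.5`. -/
theorem prod_inv_le (q : ℝ) (hq : 2 ≤ q) :
    (∏' i : ℕ, (1 - 1 / q ^ (i + 1))⁻¹) ≤ 3.5 := by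
  have h2 : (0:ℝ) < 2 := by norm_num
  have hq0 : (0:ℝ) < q := by linarith
  -- basic facts about the factors
  have hpow : ∀ i : ℕ, (2:ℝ) ^ (i + 1) ≤ q ^ (i + 1) := fun i =>
    pow_le_pow_left₀ (by norm_num) hq _
  have h2pos : ∀ i : ℕ, (0:ℝ) < 2 ^ (i + 1) := fun i => by positivity
  have hx2 : ∀ i : ℕ, 1 / q ^ (i + 1) ≤ 1 / 2 ^ (i + 1) := fun i =>
    one_div_le_one_div_of_le (h2pos i) (hpow i)
  have hxhalf : ∀ i : ℕ, (1:ℝ) / 2 ^ (i + 1) ≤ 1 / 2 := fun i => by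
    apply one_div_le_one_div_of_le (by norm_num)
    calc (2:ℝ) = 2 ^ 1 := (pow_one 2).symm
    _ ≤ 2 ^ (i + 1) := pow_le_pow_right₀ (by norm_num) (by omega)
  have hfpos : ∀ i : ℕ, (0:ℝ) < 1 - 1 / q ^ (i + 1) := fun i => by
    have := hx2 i; have := hxhalf i; linarith
  have hx0 : ∀ i : ℕ, (0:ℝ) < 1 / q ^ (i + 1) := fun i => by positivity
  have hf1 : ∀ i : ℕ, (1:ℝ) ≤ (1 - 1 / q ^ (i + 1))⁻¹ := fun i =>
    (one_le_inv₀ (hfpos i)).mpr (by linarith [hx0 i])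
  set g : ℕ → ℝ := fun i => (1 - 1 / 2 ^ (i + 1))⁻¹ with hg
  have hg2pos : ∀ i : ℕ, (0:ℝ) < 1 - 1 / 2 ^ (i + 1) := fun i => by
    have := hxhalf i; linarith
  have hfg : ∀ i : ℕ, (1 - 1 / q ^ (i + 1))⁻¹ ≤ g i := fun i => by
    apply inv_anti₀ (hg2pos i)
    linarith [hx2 i]
  by_cases hm : Multipliable fun i : ℕ => (1 - 1 / q ^ (i + 1))⁻¹
  swap
  · rw [tprod_eq_one_of_not_multipliable hm]; norm_num
  refine le_of_tendsto' hm.hasProd fun s => ?_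
  set n : ℕ := max ((s.sup id) + 1) 9 with hn
  have hsub : s ⊆ Finset.range n := by
    refine (Finset.subset_range_sup_succ s).trans ?_
    exact Finset.range_subset_range.mpr (le_max_left _ _)
  have h9n : 9 ≤ n := le_max_right _ _
  -- step 1 : partial product over s ≤ product over range n
  have step1 : ∏ i ∈ s, (1 - 1 / q ^ (i + 1))⁻¹ ≤
      ∏ i ∈ Finset.range n, (1 - 1 / q ^ (i + 1))⁻¹ := by
    rw [← Finset.prod_sdiff hsub]
    have h1le : (1:ℝ) ≤ ∏ i ∈ Finset.range n \ s, (1 - 1 / q ^ (i + 1))⁻¹ := by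
      calc (1:ℝ) = ∏ _i ∈ Finset.range n \ s, (1:ℝ) := by simp
      _ ≤ _ := Finset.prod_le_prod (fun i _ => zero_le_one) (fun i _ => hf1 i)
    have hps : (0:ℝ) ≤ ∏ i ∈ s, (1 - 1 / q ^ (i + 1))⁻¹ :=
      Finset.prod_nonneg fun i _ => le_of_lt (inv_pos.mpr (hfpos i))
    nlinarith
  -- step 2 : compare with q = 2
  have step2 : ∏ i ∈ Finset.range n, (1 - 1 / q ^ (i + 1))⁻¹ ≤
      ∏ i ∈ Finset.range n, g i :=
    Finset.prod_le_prod (fun i _ => le_of_lt (inv_pos.mpr (hfpos i)))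
      (fun i _ => hfg i)
  -- step 3 : split off the first 9 factors
  have hsplit : ∏ i ∈ Finset.range n, g i =
      (∏ i ∈ Finset.range 9, g i) * ∏ i ∈ Finset.Ico 9 n, g i :=
    (Finset.prod_range_mul_prod_Ico g h9n).symm
  -- bound the tail product
  have htail : ∏ i ∈ Finset.Ico 9 n, g i ≤ (1 - 1/512 : ℝ)⁻¹ := by
    have hprodinv : ∏ i ∈ Finset.Ico 9 n, g i =
        (∏ i ∈ Finset.Ico 9 n, (1 - 1 / 2 ^ (i + 1)))⁻¹ := by
      rw [← Finset.prod_inv_distrib]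
    rw [hprodinv]
    have hw : (1 - 1/512 : ℝ) ≤ ∏ i ∈ Finset.Ico 9 n, (1 - 1 / 2 ^ (i + 1)) := by
      rw [Finset.prod_Ico_eq_prod_range]
      have key := weier_aux (fun j => 1 / 2 ^ (9 + j + 1))
        (fun j => by positivity)
        (fun j => le_trans (hxhalf _) (by norm_num)) (n - 9)
      refine le_trans ?_ key
      have hsum : ∑ j ∈ Finset.range (n - 9), (1:ℝ) / 2 ^ (9 + j + 1) ≤ 1/512 := by
        have : ∀ j : ℕ, (1:ℝ) / 2 ^ (9 + j + 1) = (1/1024) * (1/2)^j := by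
          intro j
          rw [pow_add, pow_add]
          norm_num
          rw [one_div_pow]
          ring
        rw [Finset.sum_congr rfl fun j _ => this j, ← Finset.mul_sum]
        have hgeom : ∑ j ∈ Finset.range (n - 9), ((1:ℝ)/2)^j ≤ 2 := by
          have := geom_sum_eq (by norm_num : ((1:ℝ)/2) ≠ 1) (n - 9)
          rw [this]
          have hpk : (0:ℝ) ≤ (1/2)^(n-9) := by positivity
          have hpk1 : ((1:ℝ)/2)^(n-9) ≤ 1 := pow_le_one₀ (by norm_num) (by norm_num)
          rw [div_le_iff_of_neg (by norm_num : ((1:ℝ)/2 - 1) < 0)]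
          linarith
        linarith [mul_le_mul_of_nonneg_left hgeom (by norm_num : (0:ℝ) ≤ 1/1024)]
      linarith
    have hwpos : (0:ℝ) < 1 - 1/512 := by norm_num
    exact inv_anti₀ hwpos hw
  -- head product is an explicit rational number
  have hheadpos : (0:ℝ) ≤ ∏ i ∈ Finset.range 9, g i :=
    Finset.prod_nonneg fun i _ => le_of_lt (inv_pos.mpr (hg2pos i))
  have hhead : ∏ i ∈ Finset.range 9, g i ≤ 3.4594 := by
    simp only [hg]
    norm_num [Finset.prod_range_succ]
  have htailpos : (0:ℝ) ≤ ∏ i ∈ Finset.Ico 9 n, g i :=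
    Finset.prod_nonneg fun i _ => le_of_lt (inv_pos.mpr (hg2pos i))
  calc ∏ i ∈ s, (1 - 1 / q ^ (i + 1))⁻¹
      ≤ ∏ i ∈ Finset.range n, (1 - 1 / q ^ (i + 1))⁻¹ := step1
    _ ≤ ∏ i ∈ Finset.range n, g i := step2
    _ = (∏ i ∈ Finset.range 9, g i) * ∏ i ∈ Finset.Ico 9 n, g i := hsplit
    _ ≤ 3.4594 * (1 - 1/512 : ℝ)⁻¹ :=
        mul_le_mul hhead htail htailpos (by norm_num)
    _ ≤ 3.5 := by norm_num
end

section
/- For real q ≥ 2 and integer n ≥ 1, the tail sum ∑_{m > n} q^{\binom{m}{2}} / ((q^m - 1)⋯(q - 1)) · ∏_{i≥1}(1 - 1/q^i) is at most 2/q^{n+1}, and the single term with m = n + 1 is at least 0.77/q^{n+1}. -/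
open Finset Real
set_option maxHeartbeats 1000000

private lemma weier (a : ℕ → ℝ) (h0 : ∀ i, 0 ≤ a i) (h1 : ∀ i, a i ≤ 1) (K : ℕ) :
    1 - ∑ i ∈ range K, a i ≤ ∏ i ∈ range K, (1 - a i) := by
  induction K with
  | zero => simp
  | succ K ih =>
    rw [Finset.prod_range_succ, Finset.sum_range_succ]
    have hs : 0 ≤ ∑ i ∈ range K, a i := Finset.sum_nonneg fun i _ => h0 i
    nlinarith [h0 K, h1 K]

private lemma hasProd_exp (g : ℕ → ℝ) (hg : ∀ i, 0 < g i)
    (hs : Summable fun i => Real.log (g i)) :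
    HasProd g (Real.exp (∑' i, Real.log (g i))) := by
  have h := hs.hasSum.rexp
  have he : (rexp ∘ fun i => Real.log (g i)) = g := funext fun i => Real.exp_log (hg i)
  rwa [he] at h

private lemma log_summable (g : ℕ → ℝ) (hb : ∀ i, 1/2 ≤ g i) (h1 : ∀ i, g i ≤ 1)
    (hsum : Summable (fun i => 1 - g i)) : Summable fun i => Real.log (g i) := by
  apply Summable.of_norm_bounded (hsum.mul_left 2)
  intro i
  have hg0 : (0:ℝ) < g i := lt_of_lt_of_le (by norm_num) (hb i)
  have hlog : Real.log (g i) ≤ 0 := Real.log_nonpos hg0.le (h1 i)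
  have h2 : Real.log (g i)⁻¹ ≤ (g i)⁻¹ - 1 := Real.log_le_sub_one_of_pos (inv_pos.2 hg0)
  rw [Real.log_inv] at h2
  have h3 : (g i)⁻¹ ≤ 1 + 2 * (1 - g i) := by
    rw [inv_le_iff_one_le_mul₀ hg0]
    nlinarith [hb i, h1 i]
  rw [Real.norm_eq_abs, abs_of_nonpos hlog]
  linarith
/-- For `q ≥ 2` and `n ≥ 1`, the tail sum
`∑_{m > n} q^{\binom{m}{2}}/((q^m-1)⋯(q-1)) · ∏_{i ≥ 1}(1 - 1/q^i)` is at most `2/q^{n+1}`,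
and the `m = n+1` term is at least `0.77/q^{n+1}`. -/
theorem tail_sum_bounds (q : ℝ) (hq : 2 ≤ q) (n : ℕ) (hn : 1 ≤ n) :
    (∑' j : ℕ, q ^ ((n + 1 + j).choose 2) / (∏ k ∈ Finset.Icc 1 (n + 1 + j), (q ^ k - 1)) *
        ∏' i : ℕ, (1 - 1 / q ^ (i + 1))) ≤ 2 / q ^ (n + 1) ∧
      0.77 / q ^ (n + 1) ≤
        q ^ ((n + 1).choose 2) / (∏ k ∈ Finset.Icc 1 (n + 1), (q ^ k - 1)) *
          ∏' i : ℕ, (1 - 1 / q ^ (i + 1)) := by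
  have hq0 : (0:ℝ) < q := by linarith
  have hq1 : (1:ℝ) < q := by linarith
  set f : ℕ → ℝ := fun i => 1 - 1 / q ^ (i + 1) with hfdef
  -- basic bounds on the factors
  have hpow2 : ∀ k : ℕ, 1 ≤ k → 1 / q ^ k ≤ (1/2 : ℝ) ^ k := by
    intro k hk
    rw [one_div, ← inv_pow]
    exact pow_le_pow_left₀ (by positivity) (by rw [inv_le_comm₀ hq0 (by norm_num)]; norm_num; linarith) k
  have hpowhalf : ∀ k : ℕ, 1 ≤ k → (1/2 : ℝ) ^ k ≤ 1/2 := by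
    intro k hk
    calc (1/2:ℝ)^k ≤ (1/2:ℝ)^1 := pow_le_pow_of_le_one (by norm_num) (by norm_num) hk
      _ = 1/2 := pow_one _
  have hfb : ∀ i, 1/2 ≤ f i := by
    intro i
    have := (hpow2 (i+1) (by omega)).trans (hpowhalf (i+1) (by omega))
    simp only [hfdef]; linarith
  have hf1 : ∀ i, f i ≤ 1 := by
    intro i; have : (0:ℝ) < 1 / q ^ (i+1) := by positivity
    simp only [hfdef]; linarith
  have hf0 : ∀ i, 0 < f i := fun i => lt_of_lt_of_le (by norm_num) (hfb i)
  -- summability of logs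
  have hsub : Summable (fun i => 1 - f i) := by
    have hgeo : Summable (fun i : ℕ => (1/2:ℝ) ^ i) :=
      summable_geometric_of_lt_one (by norm_num) (by norm_num)
    apply Summable.of_nonneg_of_le (fun i => by simp only [hfdef, sub_sub_cancel]; positivity) _ hgeo
    intro i
    simp only [hfdef, sub_sub_cancel]
    calc 1 / q ^ (i+1) ≤ (1/2:ℝ)^(i+1) := hpow2 _ (by omega)
      _ ≤ (1/2:ℝ)^i := pow_le_pow_of_le_one (by norm_num) (by norm_num) (by omega)
  have hlog : Summable fun i => Real.log (f i) := log_summable f hfb hf1 hsub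
  -- tails
  have hlogt : ∀ m : ℕ, Summable fun i => Real.log (f (i + m)) := by
    intro m; exact (summable_nat_add_iff m).2 hlog
  have htail_eq : ∀ m : ℕ, (∏' i, f (i + m)) = Real.exp (∑' i, Real.log (f (i + m))) :=
    fun m => (hasProd_exp _ (fun i => hf0 _) (hlogt m)).tprod_eq
  have htail_pos : ∀ m : ℕ, 0 < ∏' i, f (i + m) := by
    intro m; rw [htail_eq m]; exact Real.exp_pos _
  have htail_le1 : ∀ m : ℕ, (∏' i, f (i + m)) ≤ 1 := by
    intro m; rw [htail_eq m]
    calc Real.exp (∑' i, Real.log (f (i + m))) ≤ Real.exp 0 :=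
        Real.exp_le_exp.2 (tsum_nonpos fun i => Real.log_nonpos (hf0 _).le (hf1 _))
      _ = 1 := Real.exp_zero
  have hsplit : ∀ m : ℕ, (∏ i ∈ range m, f i) * ∏' i, f (i + m) = ∏' i, f i := by
    intro m
    rw [htail_eq m, (hasProd_exp f hf0 hlog).tprod_eq, ← Summable.sum_add_tsum_nat_add m hlog,
      Real.exp_add, Real.exp_sum]
    congr 1
    exact Finset.prod_congr rfl fun i _ => (Real.exp_log (hf0 i)).symm
  have hF_pos : ∀ m : ℕ, 0 < ∏ i ∈ range m, f i :=
    fun m => Finset.prod_pos fun i _ => hf0 i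
  -- the product over Icc
  have prodIcc : ∀ m : ℕ, (∏ k ∈ Finset.Icc 1 m, (q ^ k - 1))
      = q ^ ((m+1).choose 2) * ∏ i ∈ range m, f i := by
    intro m
    induction m with
    | zero => simp
    | succ m ih =>
      rw [Finset.prod_Icc_succ_top (by omega : 1 ≤ m + 1), ih, Finset.prod_range_succ]
      have hch : (m+2).choose 2 = (m+1).choose 2 + (m+1) := by
        have h : (m+2).choose 2 = (m+1).choose 1 + (m+1).choose 2 :=
          Nat.choose_succ_succ' (m+1) 1
        simp only [Nat.choose_one_right] at h; omega
      have hfm : q ^ (m+1) - 1 = q ^ (m+1) * f m := by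
        simp only [hfdef]
        field_simp
      rw [hfm, hch, pow_add q ((m+1).choose 2) (m+1)]
      ring
  -- the term formula
  have term_eq : ∀ m : ℕ, q ^ (m.choose 2) / (∏ k ∈ Finset.Icc 1 m, (q ^ k - 1)) * (∏' i, f i)
      = (1/q) ^ m * ∏' i, f (i + m) := by
    intro m
    rw [prodIcc m, ← hsplit m]
    have hch : (m+1).choose 2 = m.choose 2 + m := by
      have h : (m+1).choose 2 = m.choose 1 + m.choose 2 := Nat.choose_succ_succ' m 1
      simp only [Nat.choose_one_right] at h
      omega
    rw [hch, pow_add]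
    have h1 : (q:ℝ) ^ m.choose 2 ≠ 0 := by positivity
    have h2 : (q:ℝ) ^ m ≠ 0 := by positivity
    have h3 : (∏ i ∈ range m, f i) ≠ 0 := (hF_pos m).ne'
    generalize (∏' i, f (i + m)) = T
    rw [one_div, inv_pow]
    field_simp
  -- the comparison function g for the 0.77 bound
  set g : ℕ → ℝ := fun i => 1 - (1/2:ℝ) ^ (i + 3) with hgdef
  have hghalf : ∀ i : ℕ, (1/2:ℝ) ^ (i+3) ≤ 1/2 := fun i => hpowhalf _ (by omega)
  have hgb : ∀ i, 1/2 ≤ g i := fun i => by simp only [hgdef]; linarith [hghalf i]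
  have hg1 : ∀ i, g i ≤ 1 := fun i => by
    have h : (0:ℝ) < (1/2:ℝ)^(i+3) := by positivity
    simp only [hgdef]; linarith
  have hg0 : ∀ i, 0 < g i := fun i => lt_of_lt_of_le (by norm_num) (hgb i)
  have hgeo : Summable (fun i : ℕ => (1/2:ℝ) ^ i) :=
    summable_geometric_of_lt_one (by norm_num) (by norm_num)
  have hgsub : Summable (fun i => 1 - g i) := by
    simp only [hgdef, sub_sub_cancel]
    exact (summable_nat_add_iff 3).2 hgeo
  have hglog : Summable fun i => Real.log (g i) := log_summable g hgb hg1 hgsub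
  have hglogt : Summable fun i => Real.log (g (i + 5)) := (summable_nat_add_iff 5).2 hglog
  have hsum8 : ∀ K : ℕ, ∑ i ∈ range K, ((1:ℝ)/2) ^ (i + 8) ≤ (1/2)^7 := by
    intro K
    have h1 : Summable (fun i : ℕ => ((1:ℝ)/2) ^ (i + 8)) := (summable_nat_add_iff 8).2 hgeo
    have h2 : ∑' i : ℕ, ((1:ℝ)/2) ^ (i + 8) = (1/2)^7 := by
      have h3 : ∀ i : ℕ, ((1:ℝ)/2) ^ (i + 8) = (1/2)^8 * (1/2)^i := fun i => by
        rw [pow_add]; ring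
      calc ∑' i : ℕ, ((1:ℝ)/2) ^ (i + 8) = ∑' i : ℕ, ((1:ℝ)/2)^8 * (1/2)^i := tsum_congr h3
        _ = (1/2)^8 * ∑' i : ℕ, ((1:ℝ)/2)^i := tsum_mul_left
        _ = (1/2)^8 * (1 - 1/2)⁻¹ := by
            rw [tsum_geometric_of_lt_one (by norm_num) (by norm_num)]
        _ = (1/2)^7 := by norm_num
    calc ∑ i ∈ range K, ((1:ℝ)/2) ^ (i + 8) ≤ ∑' i : ℕ, ((1:ℝ)/2) ^ (i + 8) :=
        Summable.sum_le_tsum _ (fun i _ => by positivity) h1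
      _ = (1/2)^7 := h2
  have htail5 : 1 - (1/2:ℝ)^7 ≤ ∏' i, g (i + 5) := by
    have hp := hasProd_exp (fun i => g (i + 5)) (fun i => hg0 _) hglogt
    rw [hp.tprod_eq]
    refine ge_of_tendsto hp.tendsto_prod_nat (Filter.Eventually.of_forall fun K => ?_)
    have heq : ∏ i ∈ range K, g (i + 5) = ∏ i ∈ range K, (1 - (1/2:ℝ)^(i+8)) := by
      refine Finset.prod_congr rfl fun i _ => ?_
      have h58 : i + 5 + 3 = i + 8 := by omega
      simp only [hgdef, h58]
    rw [heq]
    have hw := weier (fun i => (1/2:ℝ)^(i+8)) (fun i => by positivity)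
      (fun i => by
        calc ((1:ℝ)/2)^(i+8) ≤ (1/2:ℝ) := hpowhalf _ (by omega)
          _ ≤ 1 := by norm_num) K
    calc 1 - (1/2:ℝ)^7 ≤ 1 - ∑ i ∈ range K, ((1:ℝ)/2)^(i+8) := by linarith [hsum8 K]
      _ ≤ _ := hw
  have gsplit : (∏ i ∈ range 5, g i) * ∏' i, g (i + 5) = ∏' i, g i := by
    rw [(hasProd_exp (fun i => g (i+5)) (fun i => hg0 _) hglogt).tprod_eq,
      (hasProd_exp g hg0 hglog).tprod_eq, ← Summable.sum_add_tsum_nat_add 5 hglog,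
      Real.exp_add, Real.exp_sum]
    congr 1
    exact Finset.prod_congr rfl fun i _ => (Real.exp_log (hg0 i)).symm
  have hprod5 : (∏ i ∈ range 5, g i) = (7/8) * (15/16) * (31/32) * (63/64) * (127/128) := by
    simp [hgdef, Finset.prod_range_succ]
    norm_num
  have hgfull : (0.77:ℝ) ≤ ∏' i, g i := by
    rw [← gsplit, hprod5]
    calc (0.77:ℝ) ≤ (7/8) * (15/16) * (31/32) * (63/64) * (127/128) * (1 - (1/2)^7) := by
          norm_num
      _ ≤ _ := mul_le_mul_of_nonneg_left htail5 (by norm_num)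
  have hcomp : ∀ i : ℕ, g i ≤ f (i + (n+1)) := by
    intro i
    have h1 : 1 / q ^ (i + (n+1) + 1) ≤ (1/2:ℝ) ^ (i + (n+1) + 1) := hpow2 _ (by omega)
    have h2 : ((1:ℝ)/2) ^ (i + (n+1) + 1) ≤ (1/2:ℝ) ^ (i + 3) :=
      pow_le_pow_of_le_one (by norm_num) (by norm_num) (by omega)
    simp only [hgdef, hfdef]
    linarith
  have htailn : (0.77:ℝ) ≤ ∏' i, f (i + (n+1)) := by
    refine hgfull.trans ?_
    rw [htail_eq (n+1), (hasProd_exp g hg0 hglog).tprod_eq]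
    exact Real.exp_le_exp.2
      (Summable.tsum_le_tsum (fun i => Real.log_le_log (hg0 i) (hcomp i)) hglog (hlogt (n+1)))
  have hx0 : (0:ℝ) < 1/q := by positivity
  have hx1 : (1:ℝ)/q < 1 := by rw [div_lt_one hq0]; linarith
  have hx2 : (1:ℝ)/q ≤ 1/2 := by rw [div_le_div_iff₀ hq0 (by norm_num)]; linarith
  constructor
  · have hfun : (fun j : ℕ => q ^ ((n + 1 + j).choose 2) /
        (∏ k ∈ Finset.Icc 1 (n + 1 + j), (q ^ k - 1)) * ∏' i, f i)
        = fun j => (1/q) ^ (n+1+j) * ∏' i, f (i + (n+1+j)) := funext fun j => term_eq (n+1+j)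
    rw [hfun]
    have hle : ∀ j : ℕ, (1/q:ℝ) ^ (n+1+j) * (∏' i, f (i + (n+1+j)))
        ≤ (1/q)^(n+1) * (1/q)^j := by
      intro j
      calc (1/q:ℝ)^(n+1+j) * (∏' i, f (i+(n+1+j)))
          ≤ (1/q:ℝ)^(n+1+j) * 1 := mul_le_mul_of_nonneg_left (htail_le1 _) (by positivity)
        _ = (1/q)^(n+1) * (1/q)^j := by rw [mul_one, pow_add]
    have hnn : ∀ j : ℕ, 0 ≤ (1/q:ℝ)^(n+1+j) * ∏' i, f (i+(n+1+j)) :=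
      fun j => mul_nonneg (by positivity) (htail_pos _).le
    have hgs : Summable (fun j : ℕ => (1/q:ℝ)^(n+1) * (1/q)^j) :=
      (summable_geometric_of_lt_one hx0.le hx1).mul_left _
    have hs : Summable (fun j : ℕ => (1/q:ℝ)^(n+1+j) * ∏' i, f (i+(n+1+j))) :=
      Summable.of_nonneg_of_le hnn hle hgs
    have hinv : (1 - 1/q:ℝ)⁻¹ ≤ 2 := by
      have h12 : (1/2:ℝ) ≤ 1 - 1/q := by linarith
      calc (1 - 1/q:ℝ)⁻¹ ≤ (1/2:ℝ)⁻¹ := by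
            exact inv_anti₀ (by norm_num) h12
        _ = 2 := by norm_num
    calc (∑' j : ℕ, (1/q:ℝ)^(n+1+j) * ∏' i, f (i+(n+1+j)))
        ≤ ∑' j : ℕ, (1/q:ℝ)^(n+1) * (1/q)^j := Summable.tsum_le_tsum hle hs hgs
      _ = (1/q)^(n+1) * ∑' j : ℕ, (1/q:ℝ)^j := tsum_mul_left
      _ = (1/q)^(n+1) * (1 - 1/q)⁻¹ := by rw [tsum_geometric_of_lt_one hx0.le hx1]
      _ ≤ (1/q)^(n+1) * 2 := mul_le_mul_of_nonneg_left hinv (by positivity)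
      _ = 2 / q^(n+1) := by rw [one_div, inv_pow]; ring
  · rw [term_eq (n+1)]
    calc (0.77:ℝ) / q^(n+1) = (1/q)^(n+1) * 0.77 := by rw [one_div, inv_pow]; ring
      _ ≤ (1/q)^(n+1) * ∏' i, f (i + (n+1)) :=
        mul_le_mul_of_nonneg_left htailn (by positivity)
end

section
/- For real q ≥ 2 and integers n ≥ m ≥ 0, the truncation error |∏_{i≥1}(1 - 1/q^i) - ∑_{j=0}^{n-m} (-1)^j / ((q^j - 1)⋯(q - 1))| is at most 1/((q^{n-m+1} - 1)(q^{n-m} - 1)⋯(q - 1)). -/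
open Finset Filter Topology

namespace TruncAux

noncomputable def bb (q : ℝ) (m j : ℕ) : ℝ := ∏ k ∈ Finset.Icc 1 j, (q ^ (m + k) - q ^ m)

noncomputable def S (q : ℝ) (m N : ℕ) : ℝ := ∑ j ∈ Finset.range (N + 1), (-1 : ℝ) ^ j / bb q m j

lemma factor_ge {q : ℝ} (hq : 2 ≤ q) (m k : ℕ) (hk : 1 ≤ k) : (1:ℝ) ≤ q ^ (m + k) - q ^ m := by
  have h1 : (1:ℝ) ≤ q ^ m := one_le_pow₀ (le_trans one_le_two hq)
  have h2 : q ^ m * q ≤ q ^ (m + k) := by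
    calc q ^ m * q = q ^ (m + 1) := (pow_succ q m).symm
    _ ≤ q ^ (m + k) := pow_le_pow_right₀ (le_trans one_le_two hq) (by omega)
  nlinarith

lemma bb_ge_one {q : ℝ} (hq : 2 ≤ q) (m j : ℕ) : (1:ℝ) ≤ bb q m j := by
  rw [bb]
  calc (1:ℝ) = ∏ _k ∈ Finset.Icc 1 j, (1:ℝ) := by simp
  _ ≤ ∏ k ∈ Finset.Icc 1 j, (q ^ (m + k) - q ^ m) :=
      Finset.prod_le_prod (fun _ _ => zero_le_one)
        (fun k hk => factor_ge hq m k (mem_Icc.mp hk).1)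

lemma bb_pos {q : ℝ} (hq : 2 ≤ q) (m j : ℕ) : (0:ℝ) < bb q m j :=
  lt_of_lt_of_le zero_lt_one (bb_ge_one hq m j)

lemma bb_zero (q : ℝ) (m : ℕ) : bb q m 0 = 1 := by simp [bb]

lemma bb_succ_left (q : ℝ) (m j : ℕ) : bb q (m + 1) j = q ^ j * bb q m j := by
  have h : ∀ k ∈ Finset.Icc 1 j, q ^ (m + 1 + k) - q ^ (m + 1) = q * (q ^ (m + k) - q ^ m) := by
    intro k _; ring
  rw [bb, Finset.prod_congr rfl h, Finset.prod_mul_distrib, Finset.prod_const, Nat.card_Icc]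
  simp [bb]

lemma bb_succ_right (q : ℝ) (m j : ℕ) :
    bb q m (j + 1) = bb q m j * (q ^ (m + j + 1) - q ^ m) := by
  rw [bb, Finset.prod_Icc_succ_top (by omega)]
  have h : m + (j + 1) = m + j + 1 := by omega
  rw [h, bb]

lemma key {q : ℝ} (hq : 2 ≤ q) (m N : ℕ) :
    1 / bb q m (N + 1) = 1 / bb q (m + 1) (N + 1) + (1 / q ^ (m + 1)) / bb q (m + 1) N := by
  have hqne : q ≠ 0 := by positivity
  have e1 : bb q (m + 1) (N + 1) = q ^ (N + 1) * bb q m (N + 1) := bb_succ_left q m (N + 1)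
  have e2 : bb q (m + 1) (N + 1) = bb q (m + 1) N * (q ^ (m + 1 + N + 1) - q ^ (m + 1)) :=
    bb_succ_right q (m + 1) N
  have h1 : bb q m (N + 1) ≠ 0 := ne_of_gt (bb_pos hq m (N + 1))
  have h2 : bb q (m + 1) N ≠ 0 := ne_of_gt (bb_pos hq (m + 1) N)
  have hF : q ^ (m + 1 + N + 1) - q ^ (m + 1) ≠ 0 := by
    have := factor_ge hq (m + 1) (N + 1) (by omega)
    have h' : m + 1 + (N + 1) = m + 1 + N + 1 := by omega
    rw [h'] at this; linarith
  have step : (1:ℝ) / bb q (m + 1) (N + 1) + (1 / q ^ (m + 1)) / bb q (m + 1) N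
      = q ^ (N + 1) / bb q (m + 1) (N + 1) := by
    rw [e2]; field_simp; ring
  rw [step, e1]
  rw [mul_comm, ← div_div]
  field_simp


lemma S_succ (q : ℝ) (m N : ℕ) :
    S q m (N + 1) = S q m N + (-1 : ℝ) ^ (N + 1) / bb q m (N + 1) := by
  rw [S, S, Finset.sum_range_succ]

lemma recA {q : ℝ} (hq : 2 ≤ q) (m : ℕ) : ∀ N,
    (1 - 1 / q ^ (m + 1)) * S q (m + 1) N = S q m (N + 1) + (-1 : ℝ) ^ N / bb q (m + 1) (N + 1) := by
  intro N
  induction N with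
  | zero =>
    have hk := key hq m 0
    simp only [S, Finset.sum_range_succ, Finset.sum_range_zero, bb_zero] at *
    norm_num at hk ⊢
    simp only [← one_div, neg_div] at hk ⊢
    linarith
  | succ N ih =>
    have hk := key hq m (N + 1)
    rw [S_succ q (m + 1) N, S_succ q m (N + 1)] at *
    linear_combination ih - ((-1 : ℝ)) ^ N * hk

lemma unrolled {q : ℝ} (hq : 2 ≤ q) : ∀ N m,
    S q m N = (∏ i ∈ Finset.range N, (1 - 1 / q ^ (m + i + 1)))
      + ∑ j ∈ Finset.range N,
          (∏ i ∈ Finset.range j, (1 - 1 / q ^ (m + i + 1)))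
            * ((-1 : ℝ) ^ (N - j) / bb q (m + j + 1) (N - j)) := by
  intro N
  induction N with
  | zero => intro m; simp [S, bb_zero]
  | succ N ih =>
    intro m
    have h1 : S q m (N + 1)
        = (1 - 1 / q ^ (m + 1)) * S q (m + 1) N + (-1 : ℝ) ^ (N + 1) / bb q (m + 1) (N + 1) := by
      linear_combination (-1 : ℝ) * recA hq m N
    rw [h1, ih (m + 1)]
    have hidx : ∀ i : ℕ, m + (i + 1) + 1 = m + 1 + i + 1 := fun i => by omega
    simp only [Finset.prod_range_succ', Finset.sum_range_succ', hidx, Nat.add_sub_add_right,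
      Nat.sub_zero, add_zero, Finset.prod_range_zero, one_mul]
    rw [mul_add, Finset.mul_sum]
    have hs : ∑ j ∈ Finset.range N,
          (1 - 1 / q ^ (m + 1)) *
            ((∏ i ∈ Finset.range j, (1 - 1 / q ^ (m + 1 + i + 1))) *
              ((-1 : ℝ) ^ (N - j) / bb q (m + 1 + j + 1) (N - j)))
        = ∑ j ∈ Finset.range N,
          (∏ i ∈ Finset.range j, (1 - 1 / q ^ (m + 1 + i + 1))) * (1 - 1 / q ^ (m + 1)) *
            ((-1 : ℝ) ^ (N - j) / bb q (m + 1 + j + 1) (N - j)) :=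
      Finset.sum_congr rfl fun j _ => by ring
    rw [hs]
    ring

lemma bb_ge_pow {q : ℝ} (hq : 2 ≤ q) (m j : ℕ) : (q ^ m) ^ j ≤ bb q m j := by
  have hq1 : (1:ℝ) ≤ q := le_trans one_le_two hq
  have hm : (1:ℝ) ≤ q ^ m := one_le_pow₀ hq1
  rw [bb]
  calc (q ^ m) ^ j = ∏ _k ∈ Finset.Icc 1 j, q ^ m := by
        rw [Finset.prod_const, Nat.card_Icc]; norm_num
  _ ≤ ∏ k ∈ Finset.Icc 1 j, (q ^ (m + k) - q ^ m) := by
      refine Finset.prod_le_prod (fun _ _ => by positivity) (fun k hk => ?_)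
      have hk1 : 1 ≤ k := (mem_Icc.mp hk).1
      have h2 : q ^ m * q ≤ q ^ (m + k) := by
        calc q ^ m * q = q ^ (m + 1) := (pow_succ q m).symm
        _ ≤ q ^ (m + k) := pow_le_pow_right₀ hq1 (by omega)
      nlinarith

lemma fac_mem {q : ℝ} (hq : 2 ≤ q) (i : ℕ) :
    0 ≤ 1 - 1 / q ^ (i + 1) ∧ 1 - 1 / q ^ (i + 1) ≤ 1 := by
  have h1 : (1:ℝ) ≤ q ^ (i + 1) := one_le_pow₀ (le_trans one_le_two hq)
  have h0 : (0:ℝ) < q ^ (i + 1) := by positivity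
  constructor
  · have : 1 / q ^ (i + 1) ≤ 1 := by
      rw [div_le_one h0]; exact h1
    linarith
  · have : 0 ≤ 1 / q ^ (i + 1) := by positivity
    linarith

lemma err_le {q : ℝ} (hq : 2 ≤ q) (N : ℕ) :
    |S q 0 N - ∏ i ∈ Finset.range N, (1 - 1 / q ^ (i + 1))| ≤ (N : ℝ) * (1/2) ^ N := by
  have hq1 : (1:ℝ) ≤ q := le_trans one_le_two hq
  have h := unrolled hq N 0
  simp only [zero_add] at h
  rw [h]
  rw [add_sub_cancel_left]
  calc |∑ j ∈ Finset.range N,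
      (∏ i ∈ Finset.range j, (1 - 1 / q ^ (i + 1)))
        * ((-1 : ℝ) ^ (N - j) / bb q (j + 1) (N - j))|
      ≤ ∑ j ∈ Finset.range N,
        |(∏ i ∈ Finset.range j, (1 - 1 / q ^ (i + 1)))
          * ((-1 : ℝ) ^ (N - j) / bb q (j + 1) (N - j))| := Finset.abs_sum_le_sum_abs _ _
  _ ≤ ∑ _j ∈ Finset.range N, (1/2 : ℝ) ^ N := by
      refine Finset.sum_le_sum (fun j hj => ?_)
      rw [abs_mul, abs_div, abs_pow, abs_neg, abs_one, one_pow]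
      have hP0 : 0 ≤ ∏ i ∈ Finset.range j, (1 - 1 / q ^ (i + 1)) :=
        Finset.prod_nonneg (fun i _ => (fac_mem hq i).1)
      have hP1 : ∏ i ∈ Finset.range j, (1 - 1 / q ^ (i + 1)) ≤ 1 :=
        Finset.prod_le_one (fun i _ => (fac_mem hq i).1) (fun i _ => (fac_mem hq i).2)
      have hbbpos := bb_pos hq (j + 1) (N - j)
      have habs : |bb q (j + 1) (N - j)| = bb q (j + 1) (N - j) := abs_of_pos hbbpos
      rw [habs]
      have hbig : (2:ℝ) ^ N ≤ bb q (j + 1) (N - j) := by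
        have h1 : ((q : ℝ) ^ (j+1)) ^ (N - j) ≤ bb q (j + 1) (N - j) := bb_ge_pow hq _ _
        have h2 : ((2:ℝ) ^ (j+1)) ^ (N - j) ≤ ((q : ℝ) ^ (j+1)) ^ (N - j) := by
          gcongr
          all_goals first | exact le_trans (by norm_num) hq | norm_num
        have h3 : (2:ℝ) ^ N ≤ ((2:ℝ) ^ (j+1)) ^ (N - j) := by
          rw [← pow_mul]
          refine pow_le_pow_right₀ one_le_two ?_
          have hjN : j < N := Finset.mem_range.mp hj
          have h4 : 1 ≤ N - j := by omega
          have h5 : j * 1 ≤ j * (N - j) := Nat.mul_le_mul_left j h4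
          have h6 : (j + 1) * (N - j) = j * (N - j) + (N - j) := by ring
          have h7 : j + (N - j) = N := by omega
          calc N = j + (N - j) := h7.symm
          _ ≤ j * (N - j) + (N - j) := Nat.add_le_add_right (by simpa using h5) (N - j)
          _ = (j + 1) * (N - j) := h6.symm
        linarith
      have h1b : 1 / bb q (j + 1) (N - j) ≤ (1/2 : ℝ) ^ N := by
        rw [div_pow, one_pow]
        rw [div_le_div_iff₀ hbbpos (by positivity)]
        nlinarith [hbig, bb_pos hq (j+1) (N-j)]
      calc |∏ i ∈ Finset.range j, (1 - 1 / q ^ (i + 1))| * (1 / bb q (j + 1) (N - j))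
          ≤ 1 * (1 / bb q (j + 1) (N - j)) := by
            rw [abs_of_nonneg hP0]
            have : 0 < 1 / bb q (j + 1) (N - j) := by positivity
            nlinarith
      _ ≤ (1/2 : ℝ) ^ N := by rw [one_mul]; exact h1b
  _ = (N : ℝ) * (1/2) ^ N := by rw [Finset.sum_const, Finset.card_range, nsmul_eq_mul]

lemma multipliable_f {q : ℝ} (hq : 2 ≤ q) : Multipliable (fun i : ℕ => 1 - 1 / q ^ (i + 1)) := by
  have hpos : ∀ i : ℕ, 0 < 1 - 1 / q ^ (i + 1) := by
    intro i
    have h1 : (2:ℝ) ≤ q ^ (i + 1) := by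
      calc (2:ℝ) = 2 ^ 1 := by norm_num
      _ ≤ 2 ^ (i + 1) := pow_le_pow_right₀ one_le_two (by omega)
      _ ≤ q ^ (i + 1) := by gcongr
    have : 1 / q ^ (i + 1) ≤ 1/2 := by
      rw [div_le_div_iff₀ (by positivity) (by norm_num)]
      linarith
    linarith
  have hlog : Summable fun n : ℕ => Real.log (1 - 1 / q ^ (n + 1)) := by
    rw [← summable_neg_iff]
    refine Summable.of_nonneg_of_le ?_ ?_
      (summable_geometric_of_lt_one (r := (1/2:ℝ)) (by norm_num) (by norm_num))
    · intro n
      simp only [neg_nonneg]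
      exact Real.log_nonpos (by linarith [hpos n])
        (by linarith [(fac_mem hq n).2])
    · intro n
      have hu2 : 1 / q ^ (n + 1) ≤ (1/2:ℝ) ^ (n + 1) := by
        rw [div_pow, one_pow]
        refine one_div_le_one_div_of_le (by positivity) ?_
        exact pow_le_pow_left₀ (by norm_num) (by linarith) _
      have hu2' : (1/2:ℝ) ^ (n + 1) ≤ 1/2 := by
        calc ((1:ℝ)/2) ^ (n + 1) ≤ (1/2:ℝ) ^ 1 :=
          pow_le_pow_of_le_one (by norm_num) (by norm_num) (by omega)
        _ = 1/2 := pow_one _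
      set u := 1 / q ^ (n + 1) with hu
      have hu0 : 0 < u := by positivity
      have h1u : (1:ℝ)/2 ≤ 1 - u := by linarith [hu2.trans hu2']
      have hkey : -Real.log (1 - u) ≤ (1 - u)⁻¹ - 1 := by
        rw [← Real.log_inv]
        exact Real.log_le_sub_one_of_pos (by positivity)
      have hinv : (1 - u)⁻¹ ≤ 2 := by
        rw [inv_le_comm₀ (by linarith) (by norm_num)]
        linarith
      have : (1 - u)⁻¹ - 1 = u * (1 - u)⁻¹ := by
        field_simp
        ring
      calc -Real.log (1 - u) ≤ (1 - u)⁻¹ - 1 := hkey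
      _ = u * (1 - u)⁻¹ := this
      _ ≤ u * 2 := by nlinarith
      _ ≤ (1/2:ℝ) ^ (n + 1) * 2 := by nlinarith
      _ = (1/2:ℝ) ^ n := by rw [pow_succ]; ring
  have := Real.multipliable_of_summable_log hpos hlog
  exact this

lemma tendsto_S {q : ℝ} (hq : 2 ≤ q) :
    Tendsto (fun N => S q 0 N) atTop (𝓝 (∏' i : ℕ, (1 - 1 / q ^ (i + 1)))) := by
  have hprod : Tendsto (fun N => ∏ i ∈ Finset.range N, (1 - 1 / q ^ (i + 1))) atTop
      (𝓝 (∏' i : ℕ, (1 - 1 / q ^ (i + 1)))) :=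
    (multipliable_f hq).hasProd.tendsto_prod_nat
  have herr : Tendsto (fun N => S q 0 N - ∏ i ∈ Finset.range N, (1 - 1 / q ^ (i + 1))) atTop
      (𝓝 0) := by
    apply squeeze_zero_norm (fun N => err_le hq N)
    exact tendsto_self_mul_const_pow_of_lt_one (by norm_num) (by norm_num)
  have := herr.add hprod
  rw [zero_add] at this
  convert this using 2 with N
  ring

lemma antitone_a {q : ℝ} (hq : 2 ≤ q) : Antitone (fun i : ℕ => 1 / bb q 0 i) := by
  apply antitone_nat_of_succ_le
  intro i
  apply one_div_le_one_div_of_le (bb_pos hq 0 i)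
  have h := factor_ge hq 0 (i + 1) (by omega)
  have e := bb_succ_right q 0 i
  simp only [zero_add, pow_zero] at h e
  rw [e]
  nlinarith [bb_pos hq 0 i]

theorem truncation_error_bound_aux (q : ℝ) (hq : 2 ≤ q) (m n : ℕ) (hmn : m ≤ n) :
    |(∏' i : ℕ, (1 - 1 / q ^ (i + 1))) -
        ∑ j ∈ Finset.range (n - m + 1), (-1 : ℝ) ^ j / ∏ k ∈ Finset.Icc 1 j, (q ^ k - 1)| ≤
      1 / ∏ k ∈ Finset.Icc 1 (n - m + 1), (q ^ k - 1) := by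
  set K := n - m with hK
  set L := ∏' i : ℕ, (1 - 1 / q ^ (i + 1)) with hL
  set g : ℕ → ℝ := fun k => ∑ i ∈ Finset.range k, (-1 : ℝ) ^ i * (1 / bb q 0 i) with hg
  have hbbeq : ∀ j, ∏ k ∈ Finset.Icc 1 j, (q ^ k - 1) = bb q 0 j := fun j =>
    Finset.prod_congr rfl (fun k _ => by simp [bb])
  have hgeq : (fun N => g (N + 1)) = fun N => S q 0 N := by
    funext N
    simp only [hg, S, mul_one_div]
  have halt : Tendsto g atTop (𝓝 L) := by
    rw [← tendsto_add_atTop_iff_nat 1]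
    rw [hgeq]
    exact tendsto_S hq
  have hub : ∀ k, L ≤ g (2 * k + 1) := fun k =>
    Antitone.tendsto_le_alternating_series halt (antitone_a hq) k
  have hlb : ∀ k, g (2 * k) ≤ L := fun k =>
    Antitone.alternating_series_le_tendsto halt (antitone_a hq) k
  have hapos : 0 < 1 / bb q 0 (K + 1) := one_div_pos.mpr (bb_pos hq 0 (K + 1))
  have hgsucc : g (K + 2) = g (K + 1) + (-1 : ℝ) ^ (K + 1) * (1 / bb q 0 (K + 1)) := by
    simp only [hg]
    rw [show K + 2 = (K + 1) + 1 from rfl, Finset.sum_range_succ]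
  have hsumeq : ∑ j ∈ Finset.range (K + 1), (-1 : ℝ) ^ j / ∏ k ∈ Finset.Icc 1 j, (q ^ k - 1)
      = g (K + 1) := by
    refine Finset.sum_congr rfl (fun j _ => ?_)
    rw [hbbeq j, mul_one_div]
  rw [hsumeq, hbbeq]
  rcases Nat.even_or_odd K with ⟨k, hk⟩ | ⟨k, hk⟩
  · -- K = k + k even
    have h1 : L ≤ g (K + 1) := by
      have := hub k
      rwa [show 2 * k + 1 = K + 1 by omega] at this
    have h2 : g (K + 2) ≤ L := by
      have := hlb (k + 1)
      rwa [show 2 * (k + 1) = K + 2 by omega] at this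
    have hneg : (-1 : ℝ) ^ (K + 1) = -1 := Odd.neg_one_pow (by refine ⟨k, by omega⟩)
    rw [hneg] at hgsucc
    rw [abs_le]
    constructor <;> nlinarith [hapos]
  · -- K = 2k + 1 odd
    have h1 : g (K + 1) ≤ L := by
      have := hlb (k + 1)
      rwa [show 2 * (k + 1) = K + 1 by omega] at this
    have h2 : L ≤ g (K + 2) := by
      have := hub (k + 1)
      rwa [show 2 * (k + 1) + 1 = K + 2 by omega] at this
    have hneg : (-1 : ℝ) ^ (K + 1) = 1 := Even.neg_one_pow (by refine ⟨k + 1, by omega⟩)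
    rw [hneg] at hgsucc
    rw [abs_le]
    constructor <;> nlinarith [hapos]

end TruncAux

/-- For `q ≥ 2` and `n ≥ m ≥ 0`, the truncation error of Euler's alternating series
is bounded by the first omitted term. -/
theorem truncation_error_bound (q : ℝ) (hq : 2 ≤ q) (m n : ℕ) (hmn : m ≤ n) :
    |(∏' i : ℕ, (1 - 1 / q ^ (i + 1))) -
        ∑ j ∈ Finset.range (n - m + 1), (-1 : ℝ) ^ j / ∏ k ∈ Finset.Icc 1 j, (q ^ k - 1)| ≤
      1 / ∏ k ∈ Finset.Icc 1 (n - m + 1), (q ^ k - 1) :=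
  TruncAux.truncation_error_bound_aux q hq m n hmn
end

section
/- For real q ≥ 2 and integer n ≥ 1, ∑_{m=0}^{n} q^{\binom{m}{2}}/((q^m-1)⋯(q-1)) · |∏_{i≥1}(1 - 1/q^i) - ∑_{j=0}^{n-m} (-1)^j/((q^j-1)⋯(q-1))| ≤ 26/q^{n+1}. -/
open Finset Filter Topology

namespace SPB

/-- The product `(q-1)(q^2-1)⋯(q^j-1)`. -/
noncomputable def C (q : ℝ) (j : ℕ) : ℝ := ∏ k ∈ Finset.Icc 1 j, (q ^ k - 1)

noncomputable def a (q : ℝ) (j : ℕ) : ℝ := 1 / C q j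

noncomputable def g (q : ℝ) (m j : ℕ) : ℝ := (-1) ^ j / (C q j * q ^ (j * m))

variable {q : ℝ}

lemma hq0 (hq : 2 ≤ q) : 0 < q := by linarith

lemma pow_ge_two_pow (hq : 2 ≤ q) (k : ℕ) : (2:ℝ) ^ k ≤ q ^ k :=
  pow_le_pow_left₀ (by norm_num) hq k

lemma one_lt_pow' (hq : 2 ≤ q) {k : ℕ} (hk : 1 ≤ k) : 1 < q ^ k := by
  have := pow_ge_two_pow hq k
  have : (2:ℝ)^1 ≤ (2:ℝ)^k := pow_le_pow_right₀ (by norm_num) hk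
  nlinarith [pow_ge_two_pow hq k]

lemma C_zero : C q 0 = 1 := by simp [C]

lemma C_succ (j : ℕ) : C q (j + 1) = C q j * (q ^ (j+1) - 1) := by
  rw [C, Finset.prod_Icc_succ_top (Nat.le_add_left 1 j)]; rfl

lemma C_pos (hq : 2 ≤ q) (j : ℕ) : 0 < C q j := by
  refine Finset.prod_pos fun k hk => ?_
  have hk1 : 1 ≤ k := (Finset.mem_Icc.mp hk).1
  have := one_lt_pow' hq hk1
  linarith

lemma choose_two_succ (j : ℕ) : (j + 1).choose 2 = j.choose 2 + j := by
  rw [Nat.choose_succ_succ, Nat.choose_one_right, Nat.add_comm]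

lemma le_choose_two (j : ℕ) : j ≤ (j + 1).choose 2 := by
  rw [choose_two_succ]; omega

/-- Numeric lemma: partial products of (1 - 2^{-k}). -/
lemma prod_half_aux : ∀ j, 3 ≤ j →
    (21/64 : ℝ) * (7/8 + (1/2:ℝ) ^ j) ≤ ∏ k ∈ Finset.Icc 1 j, (1 - (1/2:ℝ) ^ k) := by
  intro j hj
  induction j, hj using Nat.le_induction with
  | base =>
    have : Finset.Icc 1 3 = ({1, 2, 3} : Finset ℕ) := rfl
    rw [this]
    norm_num
  | succ j hj ih =>
    rw [Finset.prod_Icc_succ_top (by omega)]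
    have h1 : (0:ℝ) < (1/2:ℝ) ^ j := by positivity
    have h2 : (1/2:ℝ) ^ j ≤ (1/2:ℝ) ^ 3 := pow_le_pow_of_le_one (by norm_num) (by norm_num) hj
    have h3 : (1/2:ℝ) ^ (j+1) = (1/2) * (1/2:ℝ) ^ j := by ring
    norm_num at h2 ⊢
    nlinarith [ih]

lemma prod_half (j : ℕ) : (147/512 : ℝ) ≤ ∏ k ∈ Finset.Icc 1 j, (1 - (1/2:ℝ) ^ k) := by
  rcases lt_or_ge j 3 with h | h
  · interval_cases j
    · norm_num [C]
    · have : Finset.Icc 1 1 = ({1} : Finset ℕ) := rfl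
      rw [this]; norm_num
    · have : Finset.Icc 1 2 = ({1, 2} : Finset ℕ) := rfl
      rw [this]; norm_num
  · have h1 := prod_half_aux j h
    have h2 : (0:ℝ) ≤ (1/2:ℝ) ^ j := by positivity
    nlinarith

/-- Lower bound on `C q j` in terms of powers of `q`. -/
lemma C_lb (hq : 2 ≤ q) (j : ℕ) :
    (147/512 : ℝ) * q ^ ((j + 1).choose 2) ≤ C q j := by
  have key : ∀ j : ℕ, (∏ k ∈ Finset.Icc 1 j, (1 - (1/2:ℝ) ^ k)) * q ^ ((j + 1).choose 2) ≤ C q j := by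
    intro j
    induction j with
    | zero => simp [C_zero]
    | succ j ih =>
      rw [C_succ, Finset.prod_Icc_succ_top (Nat.le_add_left 1 j), choose_two_succ (j+1)]
      have hqpos := hq0 hq
      have hfac : q ^ (j+1) * (1 - (1/2:ℝ) ^ (j+1)) ≤ q ^ (j+1) - 1 := by
        have : (1:ℝ) ≤ (q * (1/2)) ^ (j+1) := one_le_pow₀ (by linarith)
        rw [mul_pow] at this
        nlinarith [pow_pos hqpos (j+1)]
      have hCj := C_pos hq j
      have hprodpos : (0:ℝ) < ∏ k ∈ Finset.Icc 1 j, (1 - (1/2:ℝ) ^ k) := by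
        refine Finset.prod_pos fun k hk => ?_
        have hk1 : 1 ≤ k := (Finset.mem_Icc.mp hk).1
        have : (1/2:ℝ) ^ k ≤ (1/2) ^ 1 := pow_le_pow_of_le_one (by norm_num) (by norm_num) hk1
        norm_num at this ⊢; linarith
      have hqp1 : (0:ℝ) < q ^ ((j+1).choose 2) := pow_pos hqpos _
      have hqp2 : (0:ℝ) < q ^ (j+1) := pow_pos hqpos _
      calc (∏ k ∈ Finset.Icc 1 j, (1 - (1/2:ℝ) ^ k)) * (1 - (1/2:ℝ)^(j+1)) * q ^ ((j+1).choose 2 + (j + 1))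
          = ((∏ k ∈ Finset.Icc 1 j, (1 - (1/2:ℝ) ^ k)) * q ^ ((j+1).choose 2)) * (q^(j+1) * (1 - (1/2:ℝ)^(j+1))) := by rw [pow_add]; ring
        _ ≤ C q j * (q ^ (j+1) - 1) := by
            have hle1 : (1/2:ℝ)^(j+1) ≤ 1 := pow_le_one₀ (by norm_num) (by norm_num)
            exact mul_le_mul ih hfac (mul_nonneg (le_of_lt hqp2) (by linarith)) (le_of_lt hCj)
  calc (147/512 : ℝ) * q ^ ((j + 1).choose 2)
      ≤ (∏ k ∈ Finset.Icc 1 j, (1 - (1/2:ℝ) ^ k)) * q ^ ((j + 1).choose 2) := by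
        apply mul_le_mul_of_nonneg_right (prod_half j) (by have := hq0 hq; positivity)
    _ ≤ C q j := key j


lemma a_pos (hq : 2 ≤ q) (j : ℕ) : 0 < a q j := by
  have := C_pos hq j; simp [a]; positivity

lemma a_succ (hq : 2 ≤ q) (j : ℕ) : a q (j + 1) = a q j / (q ^ (j+1) - 1) := by
  have h1 := C_pos hq j
  have h2 := one_lt_pow' hq (Nat.le_add_left 1 j)
  rw [a, a, C_succ]
  field_simp

lemma a_ub (hq : 2 ≤ q) (j : ℕ) : a q j ≤ (512/147 : ℝ) / q ^ ((j + 1).choose 2) := by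
  have h1 := C_lb hq j
  have h2 : (0:ℝ) < q ^ ((j + 1).choose 2) := pow_pos (hq0 hq) _
  have h3 := C_pos hq j
  rw [a, div_le_div_iff₀ h3 h2]
  nlinarith

lemma a_anti (hq : 2 ≤ q) (j : ℕ) : a q (j + 1) ≤ a q j := by
  rw [a_succ hq]
  have h2 : (2:ℝ) ≤ q ^ (j+1) := by
    calc (2:ℝ) = 2^1 := by norm_num
    _ ≤ 2^(j+1) := pow_le_pow_right₀ one_le_two (by omega)
    _ ≤ q ^ (j+1) := pow_ge_two_pow hq _
  have := a_pos hq j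
  rw [div_le_iff₀ (by linarith)]
  nlinarith

lemma a_le_of_le (hq : 2 ≤ q) {i j : ℕ} (h : i ≤ j) : a q j ≤ a q i := by
  induction j, h using Nat.le_induction with
  | base => exact le_refl _
  | succ j hj ih => exact le_trans (a_anti hq j) ih

lemma a_step9 (hq : 2 ≤ q) {j : ℕ} (hj : 1 ≤ j) : a q (j + 2) ≤ a q j / 9 := by
  have h2 : (4:ℝ) ≤ q ^ (j+1) := by
    calc (4:ℝ) = 2^2 := by norm_num
    _ ≤ 2 ^ (j+1) := by apply pow_le_pow_right₀ (by norm_num); omega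
    _ ≤ q ^ (j+1) := pow_ge_two_pow hq _
  have h3 : (8:ℝ) ≤ q ^ (j+2) := by
    calc (8:ℝ) = 2^3 := by norm_num
    _ ≤ 2 ^ (j+2) := by apply pow_le_pow_right₀ (by norm_num); omega
    _ ≤ q ^ (j+2) := pow_ge_two_pow hq _
  have ha := a_pos hq j
  have ha2 := a_pos hq (j+2)
  rw [show j + 2 = (j+1) + 1 by rfl, a_succ hq, a_succ hq]
  rw [div_div, div_le_div_iff₀ (by nlinarith) (by norm_num)]
  have e12 : (21:ℝ) ≤ (q ^ (j+1) - 1) * (q ^ (j+1+1) - 1) := by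
    have : q ^ (j+1+1) = q ^ (j+2) := by norm_num
    rw [this]
    nlinarith
  nlinarith

lemma a_geo (hq : 2 ≤ q) (N k : ℕ) : a q (2*k + N + 1) ≤ a q (N+1) * (1/9:ℝ)^k := by
  induction k with
  | zero => simp
  | succ k ih =>
    have h1 : 2*(k+1) + N + 1 = (2*k + N + 1) + 2 := by ring
    rw [h1]
    calc a q ((2*k + N + 1) + 2) ≤ a q (2*k + N + 1) / 9 := a_step9 hq (by omega)
    _ ≤ (a q (N+1) * (1/9:ℝ)^k) / 9 := by gcongr
    _ = a q (N+1) * (1/9:ℝ)^(k+1) := by rw [pow_succ]; ring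


lemma g_abs (hq : 2 ≤ q) (m j : ℕ) : |g q m j| = 1 / (C q j * q ^ (j * m)) := by
  have h1 := C_pos hq j
  have h2 : (0:ℝ) < q ^ (j*m) := pow_pos (hq0 hq) _
  rw [g, abs_div, abs_pow, abs_neg, abs_one, one_pow, abs_of_pos (by positivity)]

lemma g_bound (hq : 2 ≤ q) (m j : ℕ) : |g q m j| ≤ (512/147 : ℝ) * (1/2:ℝ) ^ j := by
  rw [g_abs hq]
  have h1 := C_lb hq j
  have h2 : (0:ℝ) < q ^ (j*m) := pow_pos (hq0 hq) _
  have h3 : (1:ℝ) ≤ q ^ (j*m) := one_le_pow₀ (by linarith)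
  have h4 : (2:ℝ) ^ j ≤ q ^ ((j+1).choose 2) := by
    calc (2:ℝ) ^ j ≤ 2 ^ ((j+1).choose 2) := pow_le_pow_right₀ one_le_two (le_choose_two j)
    _ ≤ q ^ ((j+1).choose 2) := pow_ge_two_pow hq _
  have h5 : (0:ℝ) < (2:ℝ) ^ j := by positivity
  have h6 : (147/512 : ℝ) * 2 ^ j ≤ C q j * q ^ (j*m) := by
    have := C_pos hq j
    nlinarith
  rw [div_le_iff₀ (by nlinarith)]
  have : ((512/147 : ℝ) * (1/2:ℝ) ^ j) * ((147/512 : ℝ) * 2 ^ j) = 1 := by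
    rw [div_pow, one_pow]
    field_simp
  nlinarith [mul_le_mul_of_nonneg_left h6 (by positivity : (0:ℝ) ≤ (512/147 : ℝ) * (1/2:ℝ) ^ j)]

lemma summable_g (hq : 2 ≤ q) (m : ℕ) : Summable (g q m) := by
  apply Summable.of_norm_bounded (g := fun j => (512/147 : ℝ) * (1/2:ℝ) ^ j)
    ((summable_geometric_of_lt_one (by norm_num) (by norm_num)).mul_left _)
  intro j
  rw [Real.norm_eq_abs]
  exact g_bound hq m j

noncomputable def G (q : ℝ) (m : ℕ) : ℝ := ∑' j, g q m j

lemma g_zero (hq : 2 ≤ q) (m : ℕ) : g q m 0 = 1 := by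
  simp [g, C_zero]

lemma g_ptwise (hq : 2 ≤ q) (m j : ℕ) :
    g q m (j+1) = g q (m+1) (j+1) - (1 / q ^ (m+1)) * g q (m+1) j := by
  have hA := C_pos hq j
  have hqp := hq0 hq
  have hx : (0:ℝ) < q ^ (j*m) := pow_pos hqp _
  have hy : (0:ℝ) < q ^ m := pow_pos hqp _
  have hz : (0:ℝ) < q ^ j := pow_pos hqp _
  have hz1 : 1 < q ^ j * q := by
    have : 1 < q ^ (j+1) := one_lt_pow' hq (by omega)
    rwa [pow_succ] at this
  have e1 : q ^ ((j+1)*m) = q^(j*m) * q^m := by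
    rw [show (j+1)*m = j*m + m by ring, pow_add]
  have e2 : q ^ ((j+1)*(m+1)) = q^(j*m) * q^j * q^m * q := by
    rw [show (j+1)*(m+1) = ((j*m + j) + m) + 1 by ring, pow_succ, pow_add, pow_add]
  have e3 : q ^ (j*(m+1)) = q^(j*m) * q^j := by
    rw [show j*(m+1) = j*m + j by ring, pow_add]
  have e4 : q ^ (m+1) = q^m * q := by rw [pow_succ]
  have e5 : q ^ (j+1) = q^j * q := by rw [pow_succ]
  rw [g, g, g, C_succ, e1, e2, e3, e4, e5, pow_succ]
  have hne : q ^ j * q - 1 ≠ 0 := by linarith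
  field_simp
  ring

lemma G_rec (hq : 2 ≤ q) (m : ℕ) : G q m = (1 - 1/q^(m+1)) * G q (m+1) := by
  have S1 := summable_g hq m
  have S2 := summable_g hq (m+1)
  have S2' : Summable (fun j => g q (m+1) (j+1)) := (summable_nat_add_iff 1).mpr S2
  calc G q m = g q m 0 + ∑' j, g q m (j+1) := Summable.tsum_eq_zero_add S1
    _ = 1 + ∑' j, (g q (m+1) (j+1) - (1 / q ^ (m+1)) * g q (m+1) j) := by
        rw [g_zero hq]
        congr 1
        exact tsum_congr fun j => g_ptwise hq m j
    _ = 1 + ((∑' j, g q (m+1) (j+1)) - ∑' j, (1 / q ^ (m+1)) * g q (m+1) j) := by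
        rw [Summable.tsum_sub S2' (S2.mul_left _)]
    _ = 1 + ((∑' j, g q (m+1) (j+1)) - (1 / q ^ (m+1)) * G q (m+1)) := by
        rw [tsum_mul_left]; rfl
    _ = 1 + ((G q (m+1) - 1) - (1 / q ^ (m+1)) * G q (m+1)) := by
        have := Summable.tsum_eq_zero_add S2
        rw [g_zero hq] at this
        have h' : ∑' j, g q (m+1) (j+1) = G q (m+1) - 1 := by
          rw [G, this]; ring
        rw [h']
    _ = (1 - 1/q^(m+1)) * G q (m+1) := by ring

lemma G_prod (hq : 2 ≤ q) (M : ℕ) :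
    G q 0 = (∏ i ∈ Finset.range M, (1 - 1/q^(i+1))) * G q M := by
  induction M with
  | zero => simp
  | succ M ih =>
    rw [ih, G_rec hq M, Finset.prod_range_succ]
    ring

lemma G_sub_one_bound (hq : 2 ≤ q) {M : ℕ} (hM : 1 ≤ M) :
    |G q M - 1| ≤ 4 * (1/2:ℝ) ^ M := by
  have S := summable_g hq M
  have S' : Summable (fun j => g q M (j+1)) := (summable_nat_add_iff 1).mpr S
  have h0 : G q M - 1 = ∑' j, g q M (j+1) := by
    have := Summable.tsum_eq_zero_add S
    rw [g_zero hq] at this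
    rw [G, this]; ring
  rw [h0]
  have hbd : ∀ j : ℕ, ‖g q M (j+1)‖ ≤ ((512/147 : ℝ) * (1/2:ℝ)^M * (1/2:ℝ)) * (1/2:ℝ) ^ j := by
    intro j
    rw [Real.norm_eq_abs, g_abs hq]
    have h1 := C_lb hq (j+1)
    have hqp := hq0 hq
    have hC2 : (147/512 : ℝ) * 2 ^ (j+1) ≤ C q (j+1) := by
      refine le_trans ?_ h1
      have : (2:ℝ) ^ (j+1) ≤ q ^ ((j+2).choose 2) := by
        calc (2:ℝ) ^ (j+1) ≤ 2 ^ ((j+2).choose 2) := pow_le_pow_right₀ one_le_two (le_choose_two (j+1))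
        _ ≤ q ^ ((j+2).choose 2) := pow_ge_two_pow hq _
      nlinarith [pow_pos (show (0:ℝ) < 2 by norm_num) (j+1)]
    have hq2 : (2:ℝ) ^ M ≤ q ^ ((j+1) * M) := by
      calc (2:ℝ) ^ M ≤ 2 ^ ((j+1)*M) := pow_le_pow_right₀ one_le_two (by nlinarith [Nat.le_mul_of_pos_left M (Nat.succ_pos j)])
      _ ≤ q ^ ((j+1)*M) := pow_ge_two_pow hq _
    have hCpos := C_pos hq (j+1)
    have hqMpos : (0:ℝ) < q ^ ((j+1)*M) := pow_pos hqp _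
    have h2 : (147/512 : ℝ) * 2^(j+1) * 2^M ≤ C q (j+1) * q ^ ((j+1)*M) := by
      nlinarith [pow_pos (show (0:ℝ) < 2 by norm_num) (j+1), pow_pos (show (0:ℝ) < 2 by norm_num) M]
    rw [div_le_iff₀ (by positivity)]
    have hkey : ((512/147 : ℝ) * (1/2:ℝ)^M * (1/2:ℝ) * (1/2:ℝ)^j) * ((147/512 : ℝ) * 2^(j+1) * 2^M) = 1 := by
      rw [div_pow, div_pow, one_pow, one_pow, pow_succ]
      field_simp
    nlinarith [mul_le_mul_of_nonneg_left h2 (by positivity : (0:ℝ) ≤ (512/147 : ℝ) * (1/2:ℝ)^M * (1/2:ℝ) * (1/2:ℝ)^j)]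
  have hsumnorm : Summable (fun j => ‖g q M (j+1)‖) := by
    apply Summable.of_nonneg_of_le (fun j => norm_nonneg _) hbd
    exact ((summable_geometric_of_lt_one (by norm_num) (by norm_num)).mul_left _)
  calc |∑' j, g q M (j+1)| ≤ ∑' j, ((512/147 : ℝ) * (1/2:ℝ)^M * (1/2:ℝ)) * (1/2:ℝ) ^ j := by
        have hn := norm_tsum_le_tsum_norm hsumnorm
        rw [Real.norm_eq_abs] at hn
        refine le_trans hn (Summable.tsum_le_tsum hbd hsumnorm ?_)
        exact ((summable_geometric_of_lt_one (by norm_num) (by norm_num)).mul_left _)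
    _ = ((512/147 : ℝ) * (1/2:ℝ)^M * (1/2:ℝ)) * (1 - 1/2)⁻¹ := by
        rw [tsum_mul_left, tsum_geometric_of_lt_one (by norm_num) (by norm_num)]
    _ ≤ 4 * (1/2:ℝ) ^ M := by
        have : (0:ℝ) < (1/2:ℝ)^M := by positivity
        nlinarith

lemma G_tendsto (hq : 2 ≤ q) : Tendsto (G q) atTop (𝓝 1) := by
  have h1 : Tendsto (fun M : ℕ => G q M - 1) atTop (𝓝 0) := by
    apply squeeze_zero_norm' (a := fun M : ℕ => 4 * (1/2:ℝ) ^ M)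
    · filter_upwards [eventually_ge_atTop 1] with M hM
      rw [Real.norm_eq_abs]
      exact G_sub_one_bound hq hM
    · have := tendsto_pow_atTop_nhds_zero_of_lt_one (show (0:ℝ) ≤ 1/2 by norm_num) (show (1/2:ℝ) < 1 by norm_num)
      simpa using this.const_mul (4:ℝ)
  have := h1.add_const 1
  simpa using this

lemma multipliable_P (hq : 2 ≤ q) : Multipliable (fun i : ℕ => 1 - 1/q^(i+1)) := by
  have hpos : ∀ (x : Unit) (n : ℕ), 0 < ((fun n (_ : Unit) => 1 - 1/q^(n+1)) n x) := by
    intro _ n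
    have h2 : (2:ℝ) ≤ q ^ (n+1) := by
      calc (2:ℝ) = 2^1 := by norm_num
      _ ≤ 2^(n+1) := pow_le_pow_right₀ one_le_two (by omega)
      _ ≤ q ^ (n+1) := pow_ge_two_pow hq _
    have : 1/q^(n+1) ≤ 1/2 := by
      rw [div_le_div_iff₀ (by linarith) (by norm_num)]; linarith
    simp only
    linarith
  exact Real.multipliable_of_summable_log (hpos ()) ((show ∀ x : Unit, Summable fun n => Real.log (1 - 1/q^(n+1)) from fun x => by
    apply Summable.of_norm_bounded (g := fun n => (1/2:ℝ)^n)
      (summable_geometric_of_lt_one (by norm_num) (by norm_num))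
    intro n
    have h2 : (2:ℝ) ≤ q ^ (n+1) := by
      calc (2:ℝ) = 2^1 := by norm_num
      _ ≤ 2^(n+1) := pow_le_pow_right₀ one_le_two (by omega)
      _ ≤ q ^ (n+1) := pow_ge_two_pow hq _
    have h2' : (2:ℝ)^(n+1) ≤ q ^ (n+1) := pow_ge_two_pow hq _
    set u := 1/q^(n+1) with hu
    have hu0 : 0 < u := by positivity
    have hu2 : u ≤ (1/2:ℝ)^(n+1) := by
      rw [hu, div_pow, one_pow]
      rw [div_le_div_iff₀ (by linarith) (by positivity)]
      nlinarith [pow_pos (show (0:ℝ) < 2 by norm_num) (n+1)]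
    have hu12 : u ≤ 1/2 := le_trans hu2 (by
      calc (1/2:ℝ)^(n+1) ≤ (1/2:ℝ)^1 := pow_le_pow_of_le_one (by norm_num) (by norm_num) (by omega)
      _ = 1/2 := pow_one _)
    have hpos1 : (0:ℝ) < 1 - u := by linarith
    have hlog_le : Real.log (1 - u) ≤ 0 := Real.log_nonpos (by linarith) (by linarith)
    have hlog_ge : 1 - (1-u)⁻¹ ≤ Real.log (1 - u) := Real.one_sub_inv_le_log_of_pos hpos1
    have hinv : (1-u)⁻¹ - 1 ≤ 2*u := by
      rw [inv_eq_one_div, div_sub' (by linarith : (1:ℝ) - u ≠ 0)]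
      rw [div_le_iff₀ hpos1]
      nlinarith
    rw [Real.norm_eq_abs, abs_of_nonpos hlog_le]
    have h3 : (2:ℝ) * u ≤ (1/2:ℝ)^n := by
      have : (1/2:ℝ)^(n+1) = (1/2) * (1/2)^n := by rw [pow_succ]; ring
      nlinarith
    linarith) ())

lemma G0_eq_P (hq : 2 ≤ q) : (∏' i : ℕ, (1 - 1/q^(i+1))) = G q 0 := by
  have h1 : Tendsto (fun M => ∏ i ∈ Finset.range M, (1 - 1/q^(i+1))) atTop
      (𝓝 (∏' i : ℕ, (1 - 1/q^(i+1)))) := HasProd.tendsto_prod_nat (multipliable_P hq).hasProd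
  have h3 : Tendsto (fun M => (∏ i ∈ Finset.range M, (1 - 1/q^(i+1))) * G q M) atTop
      (𝓝 ((∏' i : ℕ, (1 - 1/q^(i+1))) * 1)) := h1.mul (G_tendsto hq)
  have h4 : (fun M => (∏ i ∈ Finset.range M, (1 - 1/q^(i+1))) * G q M) = fun _ => G q 0 :=
    funext fun M => (G_prod hq M).symm
  rw [h4] at h3
  have := tendsto_nhds_unique h3 tendsto_const_nhds
  rw [mul_one] at this
  exact this


lemma summable_a_even (hq : 2 ≤ q) (N : ℕ) : Summable (fun k => a q (2*k + N + 1)) :=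
  Summable.of_nonneg_of_le (fun k => (a_pos hq _).le) (a_geo hq N)
    ((summable_geometric_of_lt_one (by norm_num) (by norm_num)).mul_left _)

lemma tsum_a_even (hq : 2 ≤ q) (N : ℕ) :
    ∑' k, a q (2*k + N + 1) ≤ (9/8 : ℝ) * a q (N+1) := by
  calc ∑' k, a q (2*k + N + 1) ≤ ∑' k : ℕ, a q (N+1) * (1/9:ℝ)^k :=
        Summable.tsum_le_tsum (a_geo hq N) (summable_a_even hq N)
          ((summable_geometric_of_lt_one (by norm_num) (by norm_num)).mul_left _)
    _ = a q (N+1) * (1 - 1/9)⁻¹ := by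
        rw [tsum_mul_left, tsum_geometric_of_lt_one (by norm_num) (by norm_num)]
    _ = (9/8 : ℝ) * a q (N+1) := by
        rw [show ((1:ℝ) - 1/9)⁻¹ = 9/8 by norm_num]
        ring

set_option maxHeartbeats 1000000 in
lemma tail_bound (hq : 2 ≤ q) (N : ℕ) :
    |(∏' i : ℕ, (1 - 1/q^(i+1))) - ∑ j ∈ Finset.range (N+1), (-1:ℝ)^j / C q j| ≤
      (9/8 : ℝ) * a q (N+1) := by
  set f : ℕ → ℝ := fun j => (-1:ℝ)^j / C q j with hf
  have hfg : g q 0 = f := by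
    funext j
    show (-1:ℝ)^j / (C q j * q^(j*0)) = (-1:ℝ)^j / C q j
    rw [Nat.mul_zero, pow_zero, mul_one]
  have Sf : Summable f := hfg ▸ summable_g hq 0
  have hP : (∏' i : ℕ, (1 - 1/q^(i+1))) = ∑' j, f j := by
    rw [G0_eq_P hq, G, hfg]
  have hsplit := Summable.sum_add_tsum_nat_add (N+1) Sf
  have hdiff : (∏' i : ℕ, (1 - 1/q^(i+1))) - ∑ j ∈ Finset.range (N+1), f j
      = ∑' i, f (i + (N+1)) := by
    rw [hP, ← hsplit]; ring
  rw [hdiff]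
  -- even/odd split
  have hUe : ∀ k : ℕ, f (2*k + (N+1)) = (-1:ℝ)^(N+1) * a q (2*k + N + 1) := by
    intro k
    have hs : ((-1:ℝ))^(2*k + (N+1)) = (-1:ℝ)^(N+1) := by
      rw [pow_add, pow_mul, neg_one_sq, one_pow, one_mul]
    simp only [f]
    rw [hs, show 2*k + (N+1) = 2*k + N + 1 by ring, a, mul_one_div]
  have hUo : ∀ k : ℕ, f (2*k + 1 + (N+1)) = -((-1:ℝ)^(N+1) * a q (2*k + (N+1) + 1)) := by
    intro k
    have hs : ((-1:ℝ))^(2*k + 1 + (N+1)) = -((-1:ℝ)^(N+1)) := by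
      rw [show 2*k + 1 + (N+1) = 2*k + (N+1) + 1 by ring, pow_succ, pow_add, pow_mul,
        neg_one_sq, one_pow, one_mul]
      ring
    simp only [f]
    rw [hs, show 2*k + (N+1) = 2*k + N + 1 by ring, a, mul_one_div]
    ring
  have hSe : Summable (fun k => f (2*k + (N+1))) := by
    apply Summable.congr (((summable_a_even hq N).mul_left ((-1:ℝ)^(N+1))))
    intro k
    exact (hUe k).symm
  have hSo : Summable (fun k => f (2*k + 1 + (N+1))) := by
    apply Summable.congr ((((summable_a_even hq (N+1)).mul_left ((-1:ℝ)^(N+1))).neg))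
    intro k
    exact (hUo k).symm
  have hsplit2 : (∑' k, f (2*k + (N+1))) + (∑' k, f (2*k + 1 + (N+1)))
      = ∑' i, f (i + (N+1)) :=
    tsum_even_add_odd (f := fun i => f (i + (N+1))) hSe hSo
  rw [← hsplit2]
  set A := ∑' k, a q (2*k + N + 1) with hA
  set B := ∑' k, a q (2*k + (N+1) + 1) with hB
  have hAe : ∑' k, f (2*k + (N+1)) = (-1:ℝ)^(N+1) * A := by
    rw [hA, ← tsum_mul_left]
    exact tsum_congr hUe
  have hBe : ∑' k, f (2*k + 1 + (N+1)) = -((-1:ℝ)^(N+1) * B) := by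
    rw [hB, ← tsum_mul_left, ← tsum_neg]
    exact tsum_congr hUo
  rw [hAe, hBe]
  have hA0 : 0 ≤ A := tsum_nonneg fun k => (a_pos hq _).le
  have hB0 : 0 ≤ B := tsum_nonneg fun k => (a_pos hq _).le
  have hA1 : A ≤ (9/8 : ℝ) * a q (N+1) := tsum_a_even hq N
  have hB1 : B ≤ (9/8 : ℝ) * a q (N+1) := by
    refine le_trans (tsum_a_even hq (N+1)) ?_
    have := a_anti hq (N+1)
    nlinarith
  have hcomb : (-1:ℝ)^(N+1) * A + -((-1:ℝ)^(N+1) * B) = (-1:ℝ)^(N+1) * (A - B) := by ring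
  rw [hcomb, abs_mul, abs_pow, abs_neg, abs_one, one_pow, one_mul]
  rw [abs_le]
  constructor <;> linarith

end SPB

open SPB Finset in
/-- For `q ≥ 2` and `n ≥ 1`,
`∑_{m=0}^n q^{\binom{m}{2}}/((q^m-1)⋯(q-1)) · |∏_{i≥1}(1-1/q^i) - ∑_{j=0}^{n-m}(-1)^j/((q^j-1)⋯(q-1))|
  ≤ 26/q^{n+1}`. -/
theorem small_partitions_bound (q : ℝ) (hq : 2 ≤ q) (n : ℕ) (hn : 1 ≤ n) :
    (∑ m ∈ Finset.range (n + 1),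
        q ^ (m.choose 2) / (∏ k ∈ Finset.Icc 1 m, (q ^ k - 1)) *
          |(∏' i : ℕ, (1 - 1 / q ^ (i + 1))) -
            ∑ j ∈ Finset.range (n - m + 1),
              (-1 : ℝ) ^ j / ∏ k ∈ Finset.Icc 1 j, (q ^ k - 1)|) ≤
      26 / q ^ (n + 1) := by
  have hqpos : (0:ℝ) < q := by linarith
  have hqn1 : (0:ℝ) < q ^ (n+1) := pow_pos hqpos _
  set c0 : ℝ := (9/8) * (512/147)^2 with hc0
  have hterm : ∀ m ∈ Finset.range (n + 1),
      q ^ (m.choose 2) / (∏ k ∈ Finset.Icc 1 m, (q ^ k - 1)) *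
          |(∏' i : ℕ, (1 - 1 / q ^ (i + 1))) -
            ∑ j ∈ Finset.range (n - m + 1),
              (-1 : ℝ) ^ j / ∏ k ∈ Finset.Icc 1 j, (q ^ k - 1)| ≤
        c0 / q ^ (n+1) * ((1/2:ℝ) ^ ((n - m + 1).choose 2)) := by
    intro m hm
    have hmn : m ≤ n := by simp at hm; omega
    -- bound on the coefficient
    have hCm := C_lb hq m
    have hCmpos := C_pos hq m
    have hb : q ^ (m.choose 2) / (∏ k ∈ Finset.Icc 1 m, (q ^ k - 1)) ≤ (512/147 : ℝ) / q ^ m := by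
      have h1 : (147/512 : ℝ) * (q ^ (m.choose 2) * q ^ m) ≤ C q m := by
        rw [← pow_add, ← choose_two_succ m] at *
        exact hCm
      have h2 : (0:ℝ) < q ^ m := pow_pos hqpos _
      have h3 : (0:ℝ) < q ^ (m.choose 2) := pow_pos hqpos _
      rw [show (∏ k ∈ Finset.Icc 1 m, (q ^ k - 1)) = C q m from rfl,
        div_le_div_iff₀ hCmpos h2]
      nlinarith
    -- tail bound
    have ht1 : |(∏' i : ℕ, (1 - 1 / q ^ (i + 1))) -
        ∑ j ∈ Finset.range (n - m + 1),
          (-1 : ℝ) ^ j / ∏ k ∈ Finset.Icc 1 j, (q ^ k - 1)| ≤ (9/8 : ℝ) * a q (n - m + 1) :=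
      tail_bound hq (n - m)
    have ht2 : a q (n - m + 1) ≤ (512/147 : ℝ) / q ^ ((n - m + 2).choose 2) := by
      have := a_ub hq (n - m + 1)
      simpa using this
    have habs : (0:ℝ) ≤ |(∏' i : ℕ, (1 - 1 / q ^ (i + 1))) -
        ∑ j ∈ Finset.range (n - m + 1),
          (-1 : ℝ) ^ j / ∏ k ∈ Finset.Icc 1 j, (q ^ k - 1)| := abs_nonneg _
    have hbpos : (0:ℝ) ≤ q ^ (m.choose 2) / (∏ k ∈ Finset.Icc 1 m, (q ^ k - 1)) := by
      have h3 : (0:ℝ) < q ^ (m.choose 2) := pow_pos hqpos _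
      positivity
    have hstep : q ^ (m.choose 2) / (∏ k ∈ Finset.Icc 1 m, (q ^ k - 1)) *
          |(∏' i : ℕ, (1 - 1 / q ^ (i + 1))) -
            ∑ j ∈ Finset.range (n - m + 1),
              (-1 : ℝ) ^ j / ∏ k ∈ Finset.Icc 1 j, (q ^ k - 1)| ≤
        ((512/147 : ℝ) / q ^ m) * ((9/8 : ℝ) * ((512/147 : ℝ) / q ^ ((n - m + 2).choose 2))) := by
      have h2 : (0:ℝ) < q ^ m := pow_pos hqpos _
      apply mul_le_mul hb _ habs (by positivity)
      refine le_trans ht1 ?_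
      have := a_pos hq (n - m + 1)
      nlinarith
    refine le_trans hstep ?_
    -- exponent arithmetic
    have hexp : m + (n - m + 2).choose 2 = (n + 1) + (n - m + 1).choose 2 := by
      have h1 : (n - m + 2).choose 2 = (n - m + 1).choose 2 + (n - m + 1) :=
        choose_two_succ (n - m + 1)
      omega
    have hpows : q ^ m * q ^ ((n - m + 2).choose 2) = q ^ (n+1) * q ^ ((n - m + 1).choose 2) := by
      rw [← pow_add, ← pow_add, hexp]
    have h2 : (0:ℝ) < q ^ m := pow_pos hqpos _
    have h4 : (0:ℝ) < q ^ ((n - m + 2).choose 2) := pow_pos hqpos _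
    have h5 : (0:ℝ) < q ^ ((n - m + 1).choose 2) := pow_pos hqpos _
    have h6 : (2:ℝ) ^ ((n - m + 1).choose 2) ≤ q ^ ((n - m + 1).choose 2) :=
      pow_ge_two_pow hq _
    have h7 : (0:ℝ) < (2:ℝ) ^ ((n - m + 1).choose 2) := by positivity
    have hL : (512/147:ℝ)/q^m * ((9/8 : ℝ) * ((512/147:ℝ)/q^((n - m + 2).choose 2)))
        = c0/(q^(n+1) * q^((n - m + 1).choose 2)) := by
      rw [← hpows, hc0]
      field_simp
    have hR : c0/q^(n+1) * (1/2:ℝ)^((n - m + 1).choose 2)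
        = c0/(q^(n+1) * 2^((n - m + 1).choose 2)) := by
      rw [div_pow, one_pow]
      field_simp
    rw [hL, hR]
    have hc0pos : (0:ℝ) ≤ c0 := by rw [hc0]; norm_num
    gcongr
  calc (∑ m ∈ Finset.range (n + 1),
        q ^ (m.choose 2) / (∏ k ∈ Finset.Icc 1 m, (q ^ k - 1)) *
          |(∏' i : ℕ, (1 - 1 / q ^ (i + 1))) -
            ∑ j ∈ Finset.range (n - m + 1),
              (-1 : ℝ) ^ j / ∏ k ∈ Finset.Icc 1 j, (q ^ k - 1)|)
      ≤ ∑ m ∈ Finset.range (n + 1), c0 / q ^ (n+1) * ((1/2:ℝ) ^ ((n - m + 1).choose 2)) :=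
        Finset.sum_le_sum hterm
    _ = c0 / q ^ (n+1) * ∑ m ∈ Finset.range (n + 1), ((1/2:ℝ) ^ ((n - m + 1).choose 2)) := by
        rw [Finset.mul_sum]
    _ = c0 / q ^ (n+1) * ∑ d ∈ Finset.range (n + 1), ((1/2:ℝ) ^ ((d + 1).choose 2)) := by
        congr 1
        have := Finset.sum_range_reflect (fun d => ((1:ℝ)/2)^((d+1).choose 2)) (n+1)
        simpa using this
    _ ≤ c0 / q ^ (n+1) * (5/3 : ℝ) := by
        have hsum : ∑ d ∈ Finset.range (n + 1), ((1/2:ℝ) ^ ((d + 1).choose 2)) ≤ (5/3 : ℝ) := by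
          rw [Finset.sum_range_succ']
          have h0 : ((1:ℝ)/2) ^ ((0 + 1).choose 2) = 1 := by norm_num
          have hterm2 : ∀ i ∈ Finset.range n,
              ((1:ℝ)/2) ^ ((i + 1 + 1).choose 2) ≤ (1/2 : ℝ) * ((1/4:ℝ))^i := by
            intro i _
            have hch : 2*i + 1 ≤ (i + 2).choose 2 := by
              have h1 : (i + 2).choose 2 = (i+1).choose 2 + (i+1) := choose_two_succ (i+1)
              have h2 := le_choose_two i
              omega
            calc ((1:ℝ)/2) ^ ((i + 1 + 1).choose 2) ≤ ((1:ℝ)/2) ^ (2*i + 1) :=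
                  pow_le_pow_of_le_one (by norm_num) (by norm_num) hch
              _ = (1/2 : ℝ) * ((1/4:ℝ))^i := by
                  rw [show 2*i+1 = 2*i + 1 from rfl, pow_succ, pow_mul]
                  norm_num
                  ring
          have hgeo : ∑ i ∈ Finset.range n, ((1/4:ℝ))^i ≤ (4/3 : ℝ) := by
            have h1 : ∑ i ∈ Finset.range n, ((1/4:ℝ))^i ≤ ∑' i : ℕ, ((1/4:ℝ))^i :=
              Summable.sum_le_tsum (Finset.range n) (fun i _ => by positivity)
                (summable_geometric_of_lt_one (by norm_num) (by norm_num))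
            rw [tsum_geometric_of_lt_one (by norm_num) (by norm_num)] at h1
            norm_num at h1
            linarith
          have h3 : ∑ i ∈ Finset.range n, ((1:ℝ)/2) ^ ((i + 1 + 1).choose 2)
              ≤ ∑ i ∈ Finset.range n, (1/2 : ℝ) * ((1/4:ℝ))^i := Finset.sum_le_sum hterm2
          rw [← Finset.mul_sum] at h3
          rw [h0]
          nlinarith
        have : (0:ℝ) ≤ c0 / q ^ (n+1) := by positivity
        nlinarith
    _ ≤ 26 / q ^ (n + 1) := by
        rw [div_mul_eq_mul_div, hc0]
        apply div_le_div_of_nonneg_right ?_ hqn1.le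
        norm_num
end

section
/- For a real number q > 1 and |u| < q, replacing q by -q: ∏_{i≥1} (1 + u/(-q)^i) = ∑_{j≥0} (-1)^{\binom{j+1}{2}} u^j / ((q^j - (-1)^j)(q^{j-1} - (-1)^{j-1}) ⋯ (q + 1)). -/
open Finset Filter

private lemma euler_sum_powerset_prod (c : ℕ → ℝ) (s : Finset ℕ) :
    ∑ T ∈ s.powerset, ∏ i ∈ T, c i = ∏ i ∈ s, (1 + c i) := by
  have h := Finset.prod_add c (fun _ => (1:ℝ)) s
  simp only [Finset.prod_const_one, mul_one] at h
  rw [← h]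
  exact Finset.prod_congr rfl fun i _ => by ring

private lemma euler_summable_prod {c : ℕ → ℝ} (hc : Summable fun i => |c i|) :
    Summable (fun S : Finset ℕ => ∏ i ∈ S, c i) := by
  have h0 : ∀ i, (0:ℝ) ≤ |c i| := fun i => abs_nonneg _
  have key : Summable fun S : Finset ℕ => ∏ i ∈ S, |c i| := by
    refine summable_of_sum_le (c := Real.exp (∑' i, |c i|))
      (fun S => Finset.prod_nonneg fun i _ => h0 i) ?_
    intro A
    calc ∑ S ∈ A, ∏ i ∈ S, |c i|
        ≤ ∑ S ∈ (A.sup id).powerset, ∏ i ∈ S, |c i| := by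
          apply Finset.sum_le_sum_of_subset_of_nonneg
          · intro T hT
            exact Finset.mem_powerset.2 (Finset.le_sup (f := id) hT)
          · intro S _ _
            exact Finset.prod_nonneg fun i _ => h0 i
      _ = ∏ i ∈ A.sup id, (1 + |c i|) := euler_sum_powerset_prod _ _
      _ ≤ ∏ i ∈ A.sup id, Real.exp |c i| := by
          refine Finset.prod_le_prod (fun i _ => by positivity) (fun i _ => ?_)
          have := Real.add_one_le_exp (|c i|)
          linarith
      _ = Real.exp (∑ i ∈ A.sup id, |c i|) := (Real.exp_sum _ _).symm
      _ ≤ Real.exp (∑' i, |c i|) := by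
          exact Real.exp_le_exp.2 (Summable.sum_le_tsum _ (fun i _ => h0 i) hc)
  refine summable_abs_iff.mp ?_
  convert key using 2 with S
  · rfl
  exact Finset.abs_prod _ _

private lemma euler_summable_ite {ι : Type*} {f : ι → ℝ} (hf : Summable f)
    (P : ι → Prop) [DecidablePred P] : Summable fun i => if P i then f i else 0 := by
  refine Summable.of_norm_bounded (summable_abs_iff.mpr hf) fun i => ?_
  by_cases h : P i <;> simp [h, abs_nonneg]

private noncomputable def eulerV (t : ℝ) (S : Finset ℕ) : ℝ := ∏ i ∈ S, t ^ (i + 1)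

private noncomputable def eulerW (t : ℝ) (j : ℕ) : ℝ :=
  ∑' S : Finset ℕ, if S.card = j then eulerV t S else 0

private lemma eulerV_summable_abs {t : ℝ} (ht : |t| < 1) :
    Summable fun i : ℕ => |t ^ (i + 1)| := by
  have h : Summable fun i : ℕ => |t| * |t| ^ i :=
    (summable_geometric_of_lt_one (abs_nonneg t) ht).mul_left _
  refine h.congr fun i => ?_
  rw [abs_pow, pow_succ']

private lemma eulerV_summable {t : ℝ} (ht : |t| < 1) : Summable (eulerV t) :=
  euler_summable_prod (eulerV_summable_abs ht)

private lemma eulerW_zero (t : ℝ) : eulerW t 0 = 1 := by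
  rw [eulerW, tsum_eq_single (∅ : Finset ℕ)]
  · simp [eulerV]
  · intro S hS
    rw [if_neg]
    simpa [Finset.card_eq_zero] using hS

private def eulerEmb : ℕ ↪ ℕ := ⟨fun n => n + 1, add_left_injective 1⟩

private lemma eulerW_succ {t : ℝ} (ht : |t| < 1) (j : ℕ) :
    eulerW t (j + 1) = t ^ (j + 1) * eulerW t j + t ^ (j + 1) * eulerW t (j + 1) := by
  have hV : Summable (eulerV t) := eulerV_summable ht
  have hA : Summable fun S : Finset ℕ =>
      if S.card = j + 1 ∧ 0 ∈ S then eulerV t S else 0 := euler_summable_ite hV _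
  have hB : Summable fun S : Finset ℕ =>
      if S.card = j + 1 ∧ 0 ∉ S then eulerV t S else 0 := euler_summable_ite hV _
  have h0map : ∀ T : Finset ℕ, (0 : ℕ) ∉ T.map eulerEmb := by
    intro T h
    simp only [Finset.mem_map, eulerEmb, Function.Embedding.coeFn_mk] at h
    obtain ⟨a, -, ha⟩ := h
    omega
  have hsplit : eulerW t (j + 1) =
      (∑' S : Finset ℕ, if S.card = j + 1 ∧ 0 ∈ S then eulerV t S else 0) +
      (∑' S : Finset ℕ, if S.card = j + 1 ∧ 0 ∉ S then eulerV t S else 0) := by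
    rw [eulerW, ← Summable.tsum_add hA hB]
    refine tsum_congr fun S => ?_
    by_cases h1 : S.card = j + 1 <;> by_cases h2 : (0:ℕ) ∈ S <;> simp [h1, h2]
  -- the part with 0 ∈ S
  have hg1inj : Function.Injective (fun T : Finset ℕ => insert 0 (T.map eulerEmb)) := by
    intro T T' h
    apply Finset.map_injective eulerEmb
    have := congrArg (fun s : Finset ℕ => Finset.erase s 0) h
    simpa [Finset.erase_insert (h0map T), Finset.erase_insert (h0map T')] using this
  have hsupp1 : Function.support
      (fun S : Finset ℕ => if S.card = j + 1 ∧ 0 ∈ S then eulerV t S else 0) ⊆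
      Set.range (fun T : Finset ℕ => insert 0 (T.map eulerEmb)) := by
    intro S hS
    simp only [Function.mem_support, ne_eq, ite_eq_right_iff, not_forall] at hS
    obtain ⟨⟨-, h0⟩, -⟩ := hS
    refine ⟨(S.erase 0).image (· - 1), ?_⟩
    have hmap : (((S.erase 0).image (· - 1)).map eulerEmb) = S.erase 0 := by
      ext n
      simp only [Finset.mem_map, Finset.mem_image, eulerEmb, Function.Embedding.coeFn_mk,
        Finset.mem_erase]
      constructor
      · rintro ⟨a, ⟨m, ⟨hm0, hmS⟩, rfl⟩, rfl⟩
        have hm : m - 1 + 1 = m := by omega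
        rw [hm]
        exact ⟨hm0, hmS⟩
      · rintro ⟨hn0, hnS⟩
        exact ⟨n - 1, ⟨n, ⟨hn0, hnS⟩, rfl⟩, by omega⟩
    show insert 0 (((S.erase 0).image (· - 1)).map eulerEmb) = S
    rw [hmap, Finset.insert_erase h0]
  have hg1card : ∀ T : Finset ℕ, (insert 0 (T.map eulerEmb)).card = T.card + 1 := by
    intro T
    rw [Finset.card_insert_of_notMem (h0map T), Finset.card_map]
  have hg1V : ∀ T : Finset ℕ, eulerV t (insert 0 (T.map eulerEmb)) =
      t * (eulerV t T * t ^ T.card) := by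
    intro T
    rw [eulerV, Finset.prod_insert (h0map T), Finset.prod_map]
    simp only [eulerEmb, Function.Embedding.coeFn_mk]
    rw [zero_add, pow_one]
    congr 1
    have h1 : ∏ i ∈ T, t ^ (i + 1 + 1) = ∏ i ∈ T, (t ^ (i + 1) * t) :=
      Finset.prod_congr rfl fun i _ => by ring
    rw [h1, Finset.prod_mul_distrib, Finset.prod_const, eulerV]
  have hAval : (∑' S : Finset ℕ, if S.card = j + 1 ∧ 0 ∈ S then eulerV t S else 0) =
      t ^ (j + 1) * eulerW t j := by
    rw [← hg1inj.tsum_eq hsupp1, eulerW, ← tsum_mul_left]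
    refine tsum_congr fun T => ?_
    by_cases h : T.card = j
    · rw [if_pos ⟨by rw [hg1card, h], Finset.mem_insert_self 0 _⟩, if_pos h, hg1V, h]
      ring
    · rw [if_neg, if_neg h, mul_zero]
      rintro ⟨hc, -⟩
      rw [hg1card] at hc
      omega
  -- the part with 0 ∉ S
  have hg2inj : Function.Injective (fun T : Finset ℕ => T.map eulerEmb) :=
    fun T T' h => Finset.map_injective eulerEmb h
  have hsupp2 : Function.support
      (fun S : Finset ℕ => if S.card = j + 1 ∧ 0 ∉ S then eulerV t S else 0) ⊆
      Set.range (fun T : Finset ℕ => T.map eulerEmb) := by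
    intro S hS
    simp only [Function.mem_support, ne_eq, ite_eq_right_iff, not_forall] at hS
    obtain ⟨⟨-, h0⟩, -⟩ := hS
    refine ⟨S.image (· - 1), ?_⟩
    show (S.image (· - 1)).map eulerEmb = S
    ext n
    simp only [Finset.mem_map, Finset.mem_image, eulerEmb, Function.Embedding.coeFn_mk]
    constructor
    · rintro ⟨a, ⟨m, hmS, rfl⟩, rfl⟩
      have hm0 : m ≠ 0 := fun h => h0 (h ▸ hmS)
      have hm : m - 1 + 1 = m := by omega
      rw [hm]
      exact hmS
    · intro hnS
      have hn0 : n ≠ 0 := fun h => h0 (h ▸ hnS)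
      exact ⟨n - 1, ⟨n, hnS, rfl⟩, by omega⟩
  have hg2V : ∀ T : Finset ℕ, eulerV t (T.map eulerEmb) = eulerV t T * t ^ T.card := by
    intro T
    rw [eulerV, Finset.prod_map]
    simp only [eulerEmb, Function.Embedding.coeFn_mk]
    have h1 : ∏ i ∈ T, t ^ (i + 1 + 1) = ∏ i ∈ T, (t ^ (i + 1) * t) :=
      Finset.prod_congr rfl fun i _ => by ring
    rw [h1, Finset.prod_mul_distrib, Finset.prod_const, eulerV]
  have hBval : (∑' S : Finset ℕ, if S.card = j + 1 ∧ 0 ∉ S then eulerV t S else 0) =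
      t ^ (j + 1) * eulerW t (j + 1) := by
    rw [← hg2inj.tsum_eq hsupp2, eulerW, ← tsum_mul_left]
    refine tsum_congr fun T => ?_
    by_cases h : T.card = j + 1
    · rw [if_pos ⟨by rw [Finset.card_map, h], h0map T⟩, if_pos h, hg2V, h]
      ring
    · rw [if_neg, if_neg h, mul_zero]
      rintro ⟨hc, -⟩
      rw [Finset.card_map] at hc
      exact h hc
  rw [hAval, hBval] at hsplit
  exact hsplit

set_option maxHeartbeats 1000000 in
/-- Unitary analog of Euler's identity: for `q > 1` and `|u| < q`,
`∏_{i ≥ 1}(1 + u/(-q)^i) = ∑_{j ≥ 0} (-1)^{\binom{j+1}{2}} u^j / ((q^j-(-1)^j)⋯(q+1))`. -/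
theorem euler_identity_unitary (q u : ℝ) (hq : 1 < q) (hu : |u| < q) :
    (∏' i : ℕ, (1 + u / (-q) ^ (i + 1))) =
      ∑' j : ℕ, (-1 : ℝ) ^ ((j + 1).choose 2) * u ^ j /
        ∏ k ∈ Finset.Icc 1 j, (q ^ k - (-1 : ℝ) ^ k) := by
  have hq0 : (0:ℝ) < q := lt_trans one_pos hq
  set t : ℝ := (-q)⁻¹ with htdef
  have ht : |t| < 1 := by
    rw [htdef, abs_inv, abs_neg, abs_of_pos hq0]
    exact inv_lt_one_of_one_lt₀ hq
  have hqk : ∀ k : ℕ, 1 ≤ k → (0:ℝ) < q ^ k - (-1:ℝ) ^ k := by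
    intro k hk
    have h1 : (1:ℝ) < q ^ k := one_lt_pow₀ hq (by omega)
    have h2 : (-1:ℝ) ^ k ≤ 1 := by
      rcases Nat.even_or_odd k with he | ho
      · rw [he.neg_one_pow]
      · rw [ho.neg_one_pow]; norm_num
    linarith
  have hWform : ∀ j : ℕ, eulerW t j =
      (-1:ℝ) ^ ((j + 1).choose 2) / ∏ k ∈ Finset.Icc 1 j, (q ^ k - (-1:ℝ) ^ k) := by
    intro j
    induction j with
    | zero => norm_num [eulerW_zero]
    | succ j ih =>
      have hrec := eulerW_succ ht j
      have htpow : |t ^ (j + 1)| < 1 := by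
        rw [abs_pow]
        exact pow_lt_one₀ (abs_nonneg _) ht (Nat.succ_ne_zero j)
      have hden : (1:ℝ) - t ^ (j + 1) ≠ 0 := by
        intro h
        have h1 : t ^ (j + 1) = 1 := by linarith
        rw [h1] at htpow
        norm_num at htpow
      have hsolve : eulerW t (j + 1) = t ^ (j + 1) * eulerW t j / (1 - t ^ (j + 1)) := by
        field_simp
        linear_combination (1 : ℝ) * hrec
      have hD : (∏ k ∈ Finset.Icc 1 j, (q ^ k - (-1:ℝ) ^ k)) ≠ 0 :=
        ne_of_gt (Finset.prod_pos fun k hk => hqk k (Finset.mem_Icc.1 hk).1)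
      have hD1 : q ^ (j + 1) - (-1:ℝ) ^ (j + 1) ≠ 0 := ne_of_gt (hqk (j + 1) (by omega))
      have hP : (q:ℝ) ^ (j + 1) ≠ 0 := by positivity
      have he2 : ((-1:ℝ) ^ (j + 1)) * ((-1:ℝ) ^ (j + 1)) = 1 := by
        rw [← mul_pow]; norm_num
      have ht' : t ^ (j + 1) = (-1:ℝ) ^ (j + 1) / q ^ (j + 1) := by
        rw [htdef, inv_pow, neg_pow, mul_inv, inv_eq_of_mul_eq_one_left he2, div_eq_mul_inv]
      have hkey : t ^ (j + 1) / (1 - t ^ (j + 1)) =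
          (-1:ℝ) ^ (j + 1) / (q ^ (j + 1) - (-1:ℝ) ^ (j + 1)) := by
        have hone : (1:ℝ) - (-1:ℝ) ^ (j + 1) / q ^ (j + 1) =
            (q ^ (j + 1) - (-1:ℝ) ^ (j + 1)) / q ^ (j + 1) := by field_simp
        rw [ht', hone]
        field_simp
      rw [hsolve, ih, Finset.prod_Icc_succ_top (by omega : 1 ≤ j + 1)]
      rw [show (j + 1 + 1).choose 2 = (j + 1) + (j + 1).choose 2 by
        rw [Nat.choose_succ_succ (j + 1) 1, Nat.choose_one_right]]
      calc t ^ (j + 1) * ((-1:ℝ) ^ ((j + 1).choose 2) /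
              ∏ k ∈ Finset.Icc 1 j, (q ^ k - (-1:ℝ) ^ k)) / (1 - t ^ (j + 1))
          = (t ^ (j + 1) / (1 - t ^ (j + 1))) * ((-1:ℝ) ^ ((j + 1).choose 2) /
              ∏ k ∈ Finset.Icc 1 j, (q ^ k - (-1:ℝ) ^ k)) := by ring
        _ = ((-1:ℝ) ^ (j + 1) / (q ^ (j + 1) - (-1:ℝ) ^ (j + 1))) *
              ((-1:ℝ) ^ ((j + 1).choose 2) /
              ∏ k ∈ Finset.Icc 1 j, (q ^ k - (-1:ℝ) ^ k)) := by rw [hkey]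
        _ = (-1:ℝ) ^ (j + 1) * (-1:ℝ) ^ ((j + 1).choose 2) /
              ((∏ k ∈ Finset.Icc 1 j, (q ^ k - (-1:ℝ) ^ k)) *
                (q ^ (j + 1) - (-1:ℝ) ^ (j + 1))) := by
            rw [div_mul_div_comm]
            ring
        _ = (-1:ℝ) ^ ((j + 1) + (j + 1).choose 2) /
              ((∏ k ∈ Finset.Icc 1 j, (q ^ k - (-1:ℝ) ^ k)) *
                (q ^ (j + 1) - (-1:ℝ) ^ (j + 1))) := by
            rw [pow_add (-1:ℝ) (j + 1) ((j + 1).choose 2)]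
  have hxabs : Summable fun i : ℕ => |u * t ^ (i + 1)| := by
    simpa [abs_mul] using (eulerV_summable_abs ht).mul_left |u|
  have hw : Summable (fun S : Finset ℕ => ∏ i ∈ S, (u * t ^ (i + 1))) :=
    euler_summable_prod hxabs
  have hpow : Tendsto (fun s : Finset ℕ => s.powerset) atTop atTop := by
    apply Filter.tendsto_atTop_atTop.2
    intro b
    refine ⟨b.sup id, fun a ha => Finset.le_iff_subset.mpr fun T hT => ?_⟩
    exact Finset.mem_powerset.2 (le_trans (Finset.le_sup (f := id) hT) ha)
  have hProd : HasProd (fun i : ℕ => 1 + u * t ^ (i + 1))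
      (∑' S : Finset ℕ, ∏ i ∈ S, (u * t ^ (i + 1))) := by
    have h1 : Tendsto (fun s : Finset ℕ => ∑ T ∈ s.powerset, ∏ i ∈ T, (u * t ^ (i + 1)))
        atTop (nhds (∑' S : Finset ℕ, ∏ i ∈ S, (u * t ^ (i + 1)))) := hw.hasSum.comp hpow
    exact h1.congr fun s => euler_sum_powerset_prod _ s
  have hLHS : (∏' i : ℕ, (1 + u / (-q) ^ (i + 1))) =
      ∑' S : Finset ℕ, ∏ i ∈ S, (u * t ^ (i + 1)) := by
    rw [← hProd.tprod_eq]
    refine tprod_congr fun i => ?_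
    rw [htdef, div_eq_mul_inv, ← inv_pow]
  have hsig : Summable fun p : (Σ j : ℕ, {S : Finset ℕ // S.card = j}) =>
      ∏ i ∈ (p.2 : Finset ℕ), (u * t ^ (i + 1)) :=
    (Equiv.sigmaFiberEquiv (Finset.card : Finset ℕ → ℕ)).summable_iff.2 hw
  have hgrp : (∑' S : Finset ℕ, ∏ i ∈ S, (u * t ^ (i + 1))) =
      ∑' j : ℕ, ∑' S : {S : Finset ℕ // S.card = j}, ∏ i ∈ (S : Finset ℕ), (u * t ^ (i + 1)) := by
    rw [← (Equiv.sigmaFiberEquiv (Finset.card : Finset ℕ → ℕ)).tsum_eq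
      (fun S : Finset ℕ => ∏ i ∈ S, (u * t ^ (i + 1)))]
    exact Summable.tsum_sigma hsig
  have hinner : ∀ j : ℕ,
      (∑' S : {S : Finset ℕ // S.card = j}, ∏ i ∈ (S : Finset ℕ), (u * t ^ (i + 1))) =
      u ^ j * eulerW t j := by
    intro j
    have h1 : ∀ S : {S : Finset ℕ // S.card = j},
        (∏ i ∈ (S : Finset ℕ), (u * t ^ (i + 1))) = u ^ j * eulerV t (S : Finset ℕ) := by
      intro S
      rw [Finset.prod_mul_distrib, Finset.prod_const, S.2, eulerV]
    calc (∑' S : {S : Finset ℕ // S.card = j}, ∏ i ∈ (S : Finset ℕ), (u * t ^ (i + 1)))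
        = ∑' S : {S : Finset ℕ // S.card = j}, u ^ j * eulerV t (S : Finset ℕ) :=
          tsum_congr h1
      _ = u ^ j * ∑' S : {S : Finset ℕ // S.card = j}, eulerV t (S : Finset ℕ) :=
          tsum_mul_left
      _ = u ^ j * eulerW t j := by
          congr 1
          rw [eulerW]
          refine (tsum_subtype {S : Finset ℕ | S.card = j} (eulerV t)).trans
            (tsum_congr fun S => ?_)
          by_cases h : S.card = j <;> simp [Set.indicator_apply, h]
  rw [hLHS, hgrp]
  refine tsum_congr fun j => ?_
  rw [hinner j, hWform j]
  ring
end

section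
/- For a real number q > 1 and |u| < q, ∏_{i≥1} (1 + u/(-q)^i)^{-1} = ∑_{j≥0} u^j q^{\binom{j}{2}} / ((q^j - (-1)^j)(q^{j-1} - (-1)^{j-1}) ⋯ (q + 1)). -/
open Finset Filter Topology

namespace EulerUnitaryAux

/-- The coefficient `a_j = (∏_{k=1}^j (1 - t^k))⁻¹`. -/
noncomputable def aA (t : ℝ) (j : ℕ) : ℝ := (∏ k ∈ Finset.Icc 1 j, (1 - t ^ k))⁻¹

lemma pow_abs_le {t : ℝ} (ht : |t| < 1) {k : ℕ} (hk : 1 ≤ k) : |t| ^ k ≤ |t| := by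
  calc |t| ^ k ≤ |t| ^ 1 := pow_le_pow_of_le_one (abs_nonneg t) ht.le hk
  _ = |t| := pow_one _

lemma factor_pos {t : ℝ} (ht : |t| < 1) {k : ℕ} (hk : 1 ≤ k) : 0 < 1 - |t| ^ k := by
  have := pow_abs_le ht hk; linarith

lemma factor_ne {t : ℝ} (ht : |t| < 1) {k : ℕ} (hk : 1 ≤ k) : (1 : ℝ) - t ^ k ≠ 0 := by
  have h1 : |t ^ k| < 1 := by
    rw [abs_pow]; exact lt_of_le_of_lt (pow_abs_le ht hk) ht
  intro h
  have : t ^ k = 1 := by linarith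
  rw [this] at h1; simp at h1

lemma abs_factor_lb {t : ℝ} (ht : |t| < 1) {k : ℕ} (hk : 1 ≤ k) :
    1 - |t| ^ k ≤ |1 - t ^ k| := by
  have h := abs_sub_abs_le_abs_sub (1 : ℝ) (t ^ k)
  simpa [abs_pow] using h

lemma factor_lb {t : ℝ} (ht : |t| < 1) {k : ℕ} (hk : 1 ≤ k) :
    Real.exp (-(|t| ^ k * (1 - |t|)⁻¹)) ≤ 1 - |t| ^ k := by
  set s := |t| ^ k with hs
  have hs0 : 0 ≤ s := pow_nonneg (abs_nonneg t) k
  have hsle : s ≤ |t| := pow_abs_le ht hk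
  have h1 : (0:ℝ) < 1 - |t| := by linarith
  have h2 : (0:ℝ) < 1 - s := by linarith
  set r := s * (1 - |t|)⁻¹ with hr
  have hr0 : 0 ≤ r := mul_nonneg hs0 (le_of_lt (inv_pos.2 h1))
  have hre : r * (1 - |t|) = s := by rw [hr, mul_assoc, inv_mul_cancel₀ h1.ne', mul_one]
  have hexp := Real.add_one_le_exp r
  rw [Real.exp_neg, inv_le_comm₀ (Real.exp_pos r) h2]
  calc (1 - s)⁻¹ ≤ 1 + r := by
        rw [inv_le_iff_one_le_mul₀ h2]
        nlinarith
    _ ≤ Real.exp r := by linarith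

/-- Uniform bound on the coefficients. -/
lemma aA_bound {t : ℝ} (ht : |t| < 1) (j : ℕ) :
    |aA t j| ≤ Real.exp ((1 - |t|)⁻¹ * (1 - |t|)⁻¹) := by
  have h1 : (0:ℝ) < 1 - |t| := by have := abs_nonneg t; linarith
  -- lower bound the product of |1 - t^k|
  have hB : Real.exp (-((1 - |t|)⁻¹ * (1 - |t|)⁻¹)) ≤
      ∏ k ∈ Finset.Icc 1 j, |1 - t ^ k| := by
    have step1 : ∏ k ∈ Finset.Icc 1 j, Real.exp (-(|t| ^ k * (1 - |t|)⁻¹)) ≤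
        ∏ k ∈ Finset.Icc 1 j, |1 - t ^ k| := by
      apply Finset.prod_le_prod (fun k _ => (Real.exp_pos _).le)
      intro k hk
      have hk1 : 1 ≤ k := (Finset.mem_Icc.mp hk).1
      exact (factor_lb ht hk1).trans (abs_factor_lb ht hk1)
    refine le_trans ?_ step1
    rw [← Real.exp_sum]
    apply Real.exp_le_exp.mpr
    rw [neg_le, ← Finset.sum_neg_distrib]
    simp only [neg_neg]
    rw [← Finset.sum_mul]
    have hsum : ∑ k ∈ Finset.Icc 1 j, |t| ^ k ≤ (1 - |t|)⁻¹ := by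
      have h := Summable.sum_le_tsum (Finset.Icc 1 j) (fun k _ => pow_nonneg (abs_nonneg t) k)
        (summable_geometric_of_lt_one (abs_nonneg t) ht)
      rwa [tsum_geometric_of_lt_one (abs_nonneg t) ht] at h
    have := inv_pos.2 h1
    nlinarith
  -- conclude
  have hprod_pos : (0:ℝ) < ∏ k ∈ Finset.Icc 1 j, |1 - t ^ k| :=
    lt_of_lt_of_le (Real.exp_pos _) hB
  have : |aA t j| = (∏ k ∈ Finset.Icc 1 j, |1 - t ^ k|)⁻¹ := by
    rw [aA, abs_inv, Finset.abs_prod]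
  rw [this, inv_le_comm₀ hprod_pos (Real.exp_pos _), ← Real.exp_neg]
  exact hB

noncomputable def CC (t : ℝ) : ℝ := Real.exp ((1 - |t|)⁻¹ * (1 - |t|)⁻¹)

lemma CC_pos (t : ℝ) : 0 < CC t := Real.exp_pos _

lemma summable_g {t : ℝ} (ht : |t| < 1) {y : ℝ} (hy : |y| < 1) :
    Summable (fun j : ℕ => y ^ j * aA t j) := by
  apply Summable.of_norm_bounded (g := fun j : ℕ => CC t * |y| ^ j)
    ((summable_geometric_of_lt_one (abs_nonneg y) hy).mul_left _)
  intro j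
  rw [Real.norm_eq_abs, abs_mul, abs_pow]
  calc |y| ^ j * |aA t j| ≤ |y| ^ j * CC t := by
        apply mul_le_mul_of_nonneg_left (aA_bound ht j) (pow_nonneg (abs_nonneg y) j)
    _ = CC t * |y| ^ j := mul_comm _ _

lemma aA_zero (t : ℝ) : aA t 0 = 1 := by simp [aA]

lemma aA_succ {t : ℝ} (ht : |t| < 1) (j : ℕ) :
    aA t (j + 1) * (1 - t ^ (j + 1)) = aA t j := by
  rw [aA, aA, Finset.prod_Icc_succ_top (by omega : 1 ≤ j + 1), mul_inv, mul_assoc,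
    inv_mul_cancel₀ (factor_ne ht (by omega : 1 ≤ j + 1)), mul_one]

lemma func_eq {t : ℝ} (ht : |t| < 1) {y : ℝ} (hy : |y| < 1) :
    (∑' j : ℕ, (y * t) ^ j * aA t j) = (1 - y) * ∑' j : ℕ, y ^ j * aA t j := by
  have hyt : |y * t| < 1 := by
    rw [abs_mul]
    calc |y| * |t| ≤ |y| * 1 := mul_le_mul_of_nonneg_left ht.le (abs_nonneg y)
      _ = |y| := mul_one _
      _ < 1 := hy
  have S1 := summable_g ht hy
  have S2 := summable_g ht hyt
  have hF : ∀ j : ℕ, y ^ (j+1) * aA t j =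
      (y ^ (j+1) * aA t (j+1) - (y*t) ^ (j+1) * aA t (j+1)) := by
    intro j
    have h := aA_succ ht j
    linear_combination (-(y ^ (j+1))) * h
  have hdiff : (∑' j : ℕ, y ^ j * aA t j) - (∑' j : ℕ, (y * t) ^ j * aA t j)
      = y * ∑' j : ℕ, y ^ j * aA t j := by
    rw [← Summable.tsum_sub S1 S2]
    have hS3 : Summable (fun j : ℕ => y ^ j * aA t j - (y*t) ^ j * aA t j) := S1.sub S2
    rw [Summable.tsum_eq_zero_add hS3]
    simp only [pow_zero, one_mul, sub_self, zero_add]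
    rw [← tsum_mul_left]
    apply tsum_congr
    intro j
    rw [← hF j]
    ring
  linarith [hdiff]

lemma iterate_eq {t x : ℝ} (ht : |t| < 1) (hx : |x| < 1) (n : ℕ) :
    (∑' j : ℕ, (x * t ^ n) ^ j * aA t j) =
      (∏ k ∈ Finset.range n, (1 - x * t ^ k)) * ∑' j : ℕ, x ^ j * aA t j := by
  induction n with
  | zero => simp
  | succ n ih =>
    have hxt : |x * t ^ n| < 1 := by
      rw [abs_mul, abs_pow]
      calc |x| * |t| ^ n ≤ |x| * 1 :=
            mul_le_mul_of_nonneg_left (pow_le_one₀ (abs_nonneg t) ht.le) (abs_nonneg x)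
        _ = |x| := mul_one _
        _ < 1 := hx
    have h1 : x * t ^ (n + 1) = (x * t ^ n) * t := by ring
    rw [h1, func_eq ht hxt, ih, Finset.prod_range_succ]
    ring

lemma g_tendsto_one {t x : ℝ} (ht : |t| < 1) (hx : |x| < 1) :
    Tendsto (fun n : ℕ => ∑' j : ℕ, (x * t ^ n) ^ j * aA t j) atTop (𝓝 1) := by
  have h1x : (0:ℝ) < 1 - |x| := by linarith
  set K := CC t * (1 - |x|)⁻¹ with hK
  have hK0 : 0 ≤ K := mul_nonneg (CC_pos t).le (inv_pos.2 h1x).le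
  have hbound : ∀ y : ℝ, |y| ≤ |x| → |(∑' j : ℕ, y ^ j * aA t j) - 1| ≤ K * |y| := by
    intro y hy
    have hy1 : |y| < 1 := lt_of_le_of_lt hy hx
    have hS := summable_g ht hy1
    have hsplit : (∑' j : ℕ, y ^ j * aA t j) = 1 + ∑' j : ℕ, y ^ (j+1) * aA t (j+1) := by
      rw [Summable.tsum_eq_zero_add hS]; simp [aA_zero]
    rw [hsplit, add_sub_cancel_left]
    have hmaj : Summable (fun j : ℕ => CC t * |y| * |y| ^ j) :=
      (summable_geometric_of_lt_one (abs_nonneg y) hy1).mul_left _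
    have hterm : ∀ j : ℕ, |y ^ (j+1) * aA t (j+1)| ≤ CC t * |y| * |y| ^ j := by
      intro j
      rw [abs_mul, abs_pow]
      calc |y| ^ (j+1) * |aA t (j+1)| ≤ |y| ^ (j+1) * CC t :=
            mul_le_mul_of_nonneg_left (aA_bound ht _) (pow_nonneg (abs_nonneg y) _)
        _ = CC t * |y| * |y| ^ j := by ring
    have hSnext : Summable (fun j : ℕ => y ^ (j+1) * aA t (j+1)) := by
      apply Summable.of_norm_bounded hmaj
      intro j; rw [Real.norm_eq_abs]; exact hterm j
    have habsS : Summable (fun j : ℕ => ‖y ^ (j+1) * aA t (j+1)‖) := by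
      simpa only [Real.norm_eq_abs] using hSnext.abs
    have h0 : ‖∑' j : ℕ, y ^ (j+1) * aA t (j+1)‖ ≤ ∑' j : ℕ, ‖y ^ (j+1) * aA t (j+1)‖ :=
      norm_tsum_le_tsum_norm habsS
    calc |∑' j : ℕ, y ^ (j+1) * aA t (j+1)| ≤ ∑' j : ℕ, |y ^ (j+1) * aA t (j+1)| := by
          simpa only [Real.norm_eq_abs] using h0
      _ ≤ ∑' j : ℕ, CC t * |y| * |y| ^ j := by
          apply Summable.tsum_le_tsum hterm hSnext.abs hmaj
      _ = CC t * |y| * (1 - |y|)⁻¹ := by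
          rw [tsum_mul_left, tsum_geometric_of_lt_one (abs_nonneg y) hy1]
      _ ≤ K * |y| := by
          rw [hK]
          have h1 : (1 - |y|)⁻¹ ≤ (1 - |x|)⁻¹ := by
            apply inv_anti₀ h1x; linarith [hy]
          have h2 : (0:ℝ) ≤ CC t * |y| := mul_nonneg (CC_pos t).le (abs_nonneg y)
          nlinarith [abs_nonneg y, (CC_pos t).le]
  rw [tendsto_iff_dist_tendsto_zero]
  apply squeeze_zero (fun n => dist_nonneg)
    (g := fun n : ℕ => (K * |x|) * |t| ^ n)
  · intro n
    rw [Real.dist_eq]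
    have h : |x * t ^ n| ≤ |x| := by
      rw [abs_mul, abs_pow]
      calc |x| * |t| ^ n ≤ |x| * 1 :=
            mul_le_mul_of_nonneg_left (pow_le_one₀ (abs_nonneg t) ht.le) (abs_nonneg x)
        _ = |x| := mul_one _
    calc |(∑' j : ℕ, (x * t ^ n) ^ j * aA t j) - 1| ≤ K * |x * t ^ n| := hbound _ h
      _ = (K * |x|) * |t| ^ n := by rw [abs_mul, abs_pow]; ring
  · simpa using (tendsto_pow_atTop_nhds_zero_of_lt_one (abs_nonneg t) ht).const_mul (K * |x|)

lemma multipliable_prod {t x : ℝ} (ht : |t| < 1) (hx : |x| < 1) :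
    Multipliable (fun i : ℕ => 1 - x * t ^ i) := by
  have h1x : (0:ℝ) < 1 - |x| := by linarith
  have hpos : ∀ i : ℕ, 0 < 1 - x * t ^ i := by
    intro i
    have h : |x * t ^ i| ≤ |x| := by
      rw [abs_mul, abs_pow]
      calc |x| * |t| ^ i ≤ |x| * 1 :=
            mul_le_mul_of_nonneg_left (pow_le_one₀ (abs_nonneg t) ht.le) (abs_nonneg x)
        _ = |x| := mul_one _
    have := abs_le.mp h
    linarith
  have hlog : Summable (fun i : ℕ => Real.log (1 - x * t ^ i)) := by
    apply Summable.of_norm_bounded (g := fun i : ℕ => ((1 - |x|)⁻¹ * |x|) * |t| ^ i)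
      ((summable_geometric_of_lt_one (abs_nonneg t) ht).mul_left _)
    intro i
    rw [Real.norm_eq_abs]
    set s := x * t ^ i with hs
    have habs : |s| ≤ |x| := by
      rw [hs, abs_mul, abs_pow]
      calc |x| * |t| ^ i ≤ |x| * 1 :=
            mul_le_mul_of_nonneg_left (pow_le_one₀ (abs_nonneg t) ht.le) (abs_nonneg x)
        _ = |x| := mul_one _
    have hsp : 0 < 1 - s := hpos i
    have hub : Real.log (1 - s) ≤ |s| * (1 - |x|)⁻¹ := by
      have h := Real.log_le_sub_one_of_pos hsp
      have h2 : -s ≤ |s| := neg_le_abs s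
      have h3 : (1:ℝ) ≤ (1 - |x|)⁻¹ := by
        nlinarith [mul_inv_cancel₀ (ne_of_gt h1x), mul_nonneg (inv_pos.2 h1x).le (abs_nonneg x)]
      nlinarith [abs_nonneg s]
    have hlb : -(|s| * (1 - |x|)⁻¹) ≤ Real.log (1 - s) := by
      have h := Real.log_le_sub_one_of_pos (inv_pos.2 hsp)
      rw [Real.log_inv] at h
      have key : (1 - s)⁻¹ - 1 ≤ |s| * (1 - |x|)⁻¹ := by
        have e1 : (1 - s)⁻¹ - 1 = s * (1 - s)⁻¹ := by field_simp; ring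
        have hsabs : s ≤ |x| := le_trans (le_abs_self s) habs
        have e2 : (1 - s)⁻¹ ≤ (1 - |x|)⁻¹ := inv_anti₀ h1x (by linarith)
        rw [e1]
        nlinarith [le_abs_self s, inv_pos.2 hsp, abs_nonneg s]
      linarith
    have : |Real.log (1 - s)| ≤ |s| * (1 - |x|)⁻¹ := abs_le.mpr ⟨hlb, hub⟩
    calc |Real.log (1 - s)| ≤ |s| * (1 - |x|)⁻¹ := this
      _ = (1 - |x|)⁻¹ * |s| := mul_comm _ _
      _ ≤ (1 - |x|)⁻¹ * (|x| * |t| ^ i) := by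
          apply mul_le_mul_of_nonneg_left _ (inv_pos.2 h1x).le
          rw [hs, abs_mul, abs_pow]
      _ = ((1 - |x|)⁻¹ * |x|) * |t| ^ i := by ring
  exact Real.multipliable_of_summable_log hpos hlog

lemma key_identity {t x : ℝ} (ht : |t| < 1) (hx : |x| < 1) :
    (∏' i : ℕ, (1 - x * t ^ i)) * (∑' j : ℕ, x ^ j * aA t j) = 1 := by
  have hM := multipliable_prod ht hx
  have hT1 : Tendsto (fun n : ℕ => (∏ k ∈ Finset.range n, (1 - x * t ^ k)) *
      ∑' j : ℕ, x ^ j * aA t j) atTop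
      (𝓝 ((∏' i : ℕ, (1 - x * t ^ i)) * ∑' j : ℕ, x ^ j * aA t j)) :=
    (hM.hasProd.tendsto_prod_nat).mul_const _
  have hT2 : Tendsto (fun n : ℕ => (∏ k ∈ Finset.range n, (1 - x * t ^ k)) *
      ∑' j : ℕ, x ^ j * aA t j) atTop (𝓝 1) := by
    apply (g_tendsto_one ht hx).congr
    intro n
    exact iterate_eq ht hx n
  exact tendsto_nhds_unique hT1 hT2

lemma sum_Icc_id (j : ℕ) : (∑ k ∈ Finset.Icc 1 j, k) = j.choose 2 + j := by
  induction j with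
  | zero => simp
  | succ n ih =>
    rw [Finset.sum_Icc_succ_top (by omega : 1 ≤ n + 1), ih, Nat.choose_succ_succ,
      Nat.choose_one_right]
    simp only [show Nat.succ 1 = 2 from rfl]
    omega

end EulerUnitaryAux

/-- Unitary analog of Euler's second identity: for `q > 1` and `|u| < q`,
`∏_{i ≥ 1}(1 + u/(-q)^i)^{-1} = ∑_{j ≥ 0} u^j q^{\binom{j}{2}} / ((q^j-(-1)^j)⋯(q+1))`. -/
theorem euler_identity_unitary_inv (q u : ℝ) (hq : 1 < q) (hu : |u| < q) :
    (∏' i : ℕ, (1 + u / (-q) ^ (i + 1)))⁻¹ =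
      ∑' j : ℕ, u ^ j * q ^ (j.choose 2) /
        ∏ k ∈ Finset.Icc 1 j, (q ^ k - (-1 : ℝ) ^ k) := by
  have hq0 : (0:ℝ) < q := lt_trans one_pos hq
  have hqne : (q:ℝ) ≠ 0 := ne_of_gt hq0
  have ht : |(-q⁻¹ : ℝ)| < 1 := by
    rw [abs_neg, abs_inv, abs_of_pos hq0]
    exact (inv_lt_one₀ hq0).mpr hq
  have hx : |u / q| < 1 := by
    rw [abs_div, abs_of_pos hq0, div_lt_one hq0]; exact hu
  have hL : (∏' i : ℕ, (1 + u / (-q) ^ (i + 1))) = ∏' i : ℕ, (1 - (u/q) * (-q⁻¹) ^ i) := by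
    apply tprod_congr
    intro i
    have hqi : (q:ℝ) ^ i ≠ 0 := pow_ne_zero i hqne
    have h1 : ((-q):ℝ)^(i+1) = ((-1):ℝ)^i * -1 * (q^i * q) := by
      rw [show ((-q):ℝ) = (-1)*q from by ring, mul_pow, pow_succ ((-1):ℝ), pow_succ q]
    have h2 : ((-q⁻¹):ℝ)^i = (-1)^i * (q^i)⁻¹ := by
      rw [show ((-q⁻¹):ℝ) = (-1)*q⁻¹ from by ring, mul_pow, inv_pow]
    rw [h1, h2]
    rcases neg_one_pow_eq_or ℝ i with e | e <;> rw [e] <;> field_simp <;> ring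
  have hR : ∀ j : ℕ, u ^ j * q ^ (j.choose 2) / ∏ k ∈ Finset.Icc 1 j, (q ^ k - (-1:ℝ) ^ k)
      = (u/q) ^ j * EulerUnitaryAux.aA (-q⁻¹) j := by
    intro j
    have hPpos : 0 < ∏ k ∈ Finset.Icc 1 j, (q ^ k - (-1:ℝ) ^ k) := by
      apply Finset.prod_pos
      intro k hk
      have hk1 := (Finset.mem_Icc.mp hk).1
      have hle : q ≤ q ^ k := le_self_pow₀ hq.le (by omega)
      rcases neg_one_pow_eq_or ℝ k with e | e <;> rw [e] <;> linarith
    have hterm : ∀ k ∈ Finset.Icc 1 j, (1 - (-q⁻¹:ℝ) ^ k) = (q ^ k - (-1:ℝ)^k) / q ^ k := by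
      intro k hk
      have hqk : (q:ℝ)^k ≠ 0 := pow_ne_zero k hqne
      have h2 : ((-q⁻¹):ℝ)^k = (-1)^k * (q^k)⁻¹ := by
        rw [show ((-q⁻¹):ℝ) = (-1)*q⁻¹ from by ring, mul_pow, inv_pow]
      rw [h2]
      field_simp
    have hprodeq : ∏ k ∈ Finset.Icc 1 j, (1 - (-q⁻¹:ℝ) ^ k)
        = (∏ k ∈ Finset.Icc 1 j, (q ^ k - (-1:ℝ)^k)) / q ^ (j.choose 2 + j) := by
      rw [Finset.prod_congr rfl hterm, Finset.prod_div_distrib]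
      congr 1
      rw [Finset.prod_pow_eq_pow_sum, EulerUnitaryAux.sum_Icc_id]
    rw [EulerUnitaryAux.aA, hprodeq]
    have hPne := ne_of_gt hPpos
    have hqc : (q:ℝ) ^ (j.choose 2) ≠ 0 := pow_ne_zero _ hqne
    have hqj : (q:ℝ) ^ j ≠ 0 := pow_ne_zero _ hqne
    rw [pow_add, div_pow]
    field_simp
  rw [hL, tsum_congr hR]
  exact inv_eq_of_mul_eq_one_right (EulerUnitaryAux.key_identity ht hx)
end

section
/- For real q ≥ 2 and integers n ≥ m ≥ 0, |∏_{i≥1}(1 + 1/(-q)^i) - ∑_{j=0}^{n-m} (-1)^{\binom{j+1}{2}} / ((q^j - (-1)^j)⋯(q + 1))| ≤ ∑_{j ≥ n-m+1} q^{-\binom{j+1}{2}} ≤ 2 q^{-\binom{n-m+2}{2}}. -/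
open Finset Filter Topology

namespace UTEB

noncomputable def z (q : ℝ) : ℝ := -(1/q)

noncomputable def d (q : ℝ) (j : ℕ) : ℝ := ∏ k ∈ Finset.range j, (1 - z q ^ (k+1))

noncomputable def gb (q : ℝ) (M j : ℕ) : ℝ :=
  if j ≤ M then d q M / (d q j * d q (M - j)) else 0

noncomputable def a_ (q : ℝ) (j : ℕ) : ℝ := z q ^ ((j+1).choose 2) / d q j

variable {q : ℝ}

lemma q_pos (hq : 2 ≤ q) : 0 < q := by linarith

lemma abs_z (hq : 2 ≤ q) : |z q| = 1/q := by
  rw [z, abs_neg, abs_of_nonneg (by positivity)]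

lemma abs_z_le (hq : 2 ≤ q) : |z q| ≤ 1/2 := by
  rw [abs_z hq]
  rw [div_le_div_iff₀ (q_pos hq) (by norm_num)]; linarith

lemma abs_z_pow_le (hq : 2 ≤ q) (k : ℕ) : |z q ^ k| ≤ (1/2)^k := by
  rw [abs_pow]
  exact pow_le_pow_left₀ (abs_nonneg _) (abs_z_le hq) k

lemma z_pow_abs_le_one_half (hq : 2 ≤ q) (k : ℕ) : |z q ^ (k+1)| ≤ 1/2 := by
  calc |z q ^ (k+1)| ≤ (1/2)^(k+1) := abs_z_pow_le hq (k+1)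
  _ ≤ (1/2)^1 := by
      apply pow_le_pow_of_le_one (by norm_num) (by norm_num) (by omega)
  _ = 1/2 := by norm_num

lemma factor_pos (hq : 2 ≤ q) (k : ℕ) : (0:ℝ) < 1 - z q ^ (k+1) := by
  have := z_pow_abs_le_one_half hq k
  have := abs_le.mp this
  linarith [this.1, this.2]

lemma d_succ (q : ℝ) (j : ℕ) : d q (j+1) = d q j * (1 - z q ^ (j+1)) := by
  rw [d, d, Finset.prod_range_succ]

lemma d_zero (q : ℝ) : d q 0 = 1 := by simp [d]

lemma z_odd_pow (hq : 2 ≤ q) (i : ℕ) : z q ^ (2*i+1) = -((1/q)^(2*i+1)) := by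
  rw [z, Odd.neg_pow ⟨i, by ring⟩]

lemma z_even_pow (hq : 2 ≤ q) (i : ℕ) : z q ^ (2*i) = (1/q)^(2*i) := by
  rw [z, Even.neg_pow ⟨i, by ring⟩]

lemma pair_ge_one (hq : 2 ≤ q) (i : ℕ) :
    (1:ℝ) ≤ (1 - z q ^ (2*i+1)) * (1 - z q ^ (2*i+2)) := by
  have h1 : z q ^ (2*i+1) = -((1/q)^(2*i+1)) := z_odd_pow hq i
  have h2 : z q ^ (2*i+2) = (1/q)^(2*i+2) := by
    have := z_even_pow hq (i+1); convert this using 2 <;> ring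
  rw [h1, h2]
  set a : ℝ := (1/q)^(2*i+1) with ha
  have ha0 : 0 < a := by positivity
  have ha2 : a ≤ 1/2 := by
    calc a ≤ (1/2)^(2*i+1) := by
          apply pow_le_pow_left₀ (by positivity)
          rw [div_le_div_iff₀ (q_pos hq) (by norm_num)]; linarith
    _ ≤ (1/2)^1 := pow_le_pow_of_le_one (by norm_num) (by norm_num) (by omega)
    _ = 1/2 := by norm_num
  have hq2 : (1/q)^(2*i+2) = a * (1/q) := by rw [ha, ← pow_succ]
  rw [hq2]
  have hqpos := q_pos hq
  have h1q : 1/q ≤ 1/2 := by rw [div_le_div_iff₀ hqpos (by norm_num)]; linarith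
  have h1q0 : 0 < 1/q := by positivity
  nlinarith [mul_pos ha0 h1q0]

lemma one_le_d_even (hq : 2 ≤ q) : ∀ i, 1 ≤ d q (2*i) := by
  intro i
  induction i with
  | zero => simp [d]
  | succ i ih =>
    have : 2*(i+1) = (2*i+1)+1 := by ring
    rw [this, d_succ, show 2*i+1 = (2*i)+1 from rfl, d_succ]
    calc (1:ℝ) ≤ 1 * 1 := by norm_num
    _ ≤ d q (2*i) * ((1 - z q ^ (2*i+1)) * (1 - z q ^ (2*i+1+1))) := by
        apply mul_le_mul ih _ (by norm_num) (by linarith)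
        exact pair_ge_one hq i
    _ = d q (2*i) * (1 - z q ^ (2*i+1)) * (1 - z q ^ (2*i+1+1)) := by ring

lemma one_le_d (hq : 2 ≤ q) (j : ℕ) : 1 ≤ d q j := by
  rcases Nat.even_or_odd j with ⟨i, hi⟩ | ⟨i, hi⟩
  · rw [hi, show i + i = 2*i by ring]; exact one_le_d_even hq i
  · rw [hi, show 2*i+1 = (2*i)+1 from rfl, d_succ]
    have h1 : z q ^ (2*i+1) = -((1/q)^(2*i+1)) := z_odd_pow hq i
    rw [h1]
    have : (0:ℝ) < (1/q)^(2*i+1) := by positivity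
    calc (1:ℝ) ≤ 1 * 1 := by norm_num
    _ ≤ d q (2*i) * (1 - -((1/q)^(2*i+1))) := by
        apply mul_le_mul (one_le_d_even hq i) (by linarith) (by norm_num) (by linarith [one_le_d_even hq i])
    _ = _ := rfl

lemma d_pos (hq : 2 ≤ q) (j : ℕ) : 0 < d q j := lt_of_lt_of_le one_pos (one_le_d hq j)

lemma d_ne_zero (hq : 2 ≤ q) (j : ℕ) : d q j ≠ 0 := (d_pos hq j).ne'

lemma d_le_three (hq : 2 ≤ q) (j : ℕ) : d q j ≤ 3 := by
  have h1 : d q j ≤ Real.exp (∑ k ∈ Finset.range j, (1/2:ℝ)^(k+1)) := by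
    rw [Real.exp_sum]
    apply Finset.prod_le_prod
    · intro k _; linarith [factor_pos hq k]
    · intro k _
      calc 1 - z q ^ (k+1) ≤ 1 + (1/2)^(k+1) := by
            have := abs_le.mp (abs_z_pow_le hq (k+1)); linarith [this.1]
      _ ≤ Real.exp ((1/2)^(k+1)) := by
            linarith [Real.add_one_le_exp ((1/2:ℝ)^(k+1))]
  have h2 : (∑ k ∈ Finset.range j, (1/2:ℝ)^(k+1)) ≤ 1 := by
    have : ∀ j : ℕ, (∑ k ∈ Finset.range j, (1/2:ℝ)^(k+1)) = 1 - (1/2)^j := by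
      intro j; induction j with
      | zero => simp
      | succ j ih => rw [Finset.sum_range_succ, ih]; ring
    rw [this]
    have : (0:ℝ) < (1/2)^j := by positivity
    linarith
  calc d q j ≤ Real.exp 1 := h1.trans (Real.exp_le_exp.mpr h2)
  _ ≤ 3 := by linarith [Real.exp_one_lt_d9.le]


lemma gb_of_le (M j : ℕ) (h : j ≤ M) : gb q M j = d q M / (d q j * d q (M-j)) := if_pos h
lemma gb_of_gt (M j : ℕ) (h : M < j) : gb q M j = 0 := if_neg (by omega)

lemma gb_zero (hq : 2 ≤ q) (M : ℕ) : gb q M 0 = 1 := by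
  rw [gb_of_le M 0 (Nat.zero_le M), d_zero]
  simp [d_ne_zero hq M]

lemma gb_self (hq : 2 ≤ q) (M : ℕ) : gb q M M = 1 := by
  rw [gb_of_le M M le_rfl]
  simp [d_zero, d_ne_zero hq M]

lemma gb_nonneg (hq : 2 ≤ q) (M j : ℕ) : 0 ≤ gb q M j := by
  unfold gb; split
  · exact div_nonneg (d_pos hq M).le (mul_nonneg (d_pos hq _).le (d_pos hq _).le)
  · exact le_rfl

lemma gb_le_three (hq : 2 ≤ q) (M j : ℕ) : gb q M j ≤ 3 := by
  unfold gb; split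
  · rw [div_le_iff₀ (mul_pos (d_pos hq _) (d_pos hq _))]
    nlinarith [one_le_d hq j, one_le_d hq (M-j), d_le_three hq M, d_pos hq j, d_pos hq (M-j)]
  · norm_num

lemma pascal (hq : 2 ≤ q) (M j : ℕ) (hjM : j ≤ M) :
    gb q (M+1) (j+1) = gb q M (j+1) + z q ^ (M-j) * gb q M j := by
  rcases eq_or_lt_of_le hjM with rfl | hlt
  · rw [gb_self hq, gb_of_gt j (j+1) (by omega), gb_self hq]
    simp
  · -- j + 1 ≤ M
    have hj1M : j + 1 ≤ M := hlt
    rw [gb_of_le (M+1) (j+1) (by omega), gb_of_le M (j+1) hj1M, gb_of_le M j (by omega)]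
    have e1 : M + 1 - (j+1) = M - j := by omega
    have e2 : M - j = (M - (j+1)) + 1 := by omega
    rw [e1, d_succ q M]
    rw [show d q (M - j) = d q (M - (j+1)) * (1 - z q ^ (M-j)) by
      rw [e2, d_succ]]
    have hzpow : z q ^ (M+1) = z q ^ (M-j) * z q ^ (j+1) := by
      rw [← pow_add]; congr 1; omega
    rw [d_succ q j] at *
    have hB := d_ne_zero hq j
    have hC : d q j * (1 - z q ^ (j+1)) ≠ 0 := by
      rw [← d_succ]; exact d_ne_zero hq (j+1)
    have hD := d_ne_zero hq (M - (j+1))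
    have hE : (1 - z q ^ (M-j)) ≠ 0 := by
      have := d_succ q (M - (j+1))
      have h' := d_ne_zero hq (M - (j+1) + 1)
      rw [d_succ] at h'
      rw [show M - (j+1) + 1 = M - j by omega] at h'
      exact right_ne_zero_of_mul h'
    rw [hzpow]
    generalize z q ^ (j+1) = w at *
    have hw : 1 - w ≠ 0 := right_ne_zero_of_mul hC
    field_simp
    ring

theorem euler_finite (hq : 2 ≤ q) (M : ℕ) :
    ∏ i ∈ Finset.range M, (1 + z q ^ (i+1)) =
      ∑ j ∈ Finset.range (M+1), z q ^ ((j+1).choose 2) * gb q M j := by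
  induction M with
  | zero => simp [Finset.sum_range_one, gb_zero hq]
  | succ M ih =>
    rw [Finset.prod_range_succ, ih]
    rw [Finset.sum_range_succ' (fun j => z q ^ ((j+1).choose 2) * gb q (M+1) j) (M+1)]
    have h0 : z q ^ ((0+1).choose 2) * gb q (M+1) 0 = 1 := by
      simp [gb_zero hq]
    rw [h0]
    have hstep : ∀ j ∈ Finset.range (M+1),
        z q ^ ((j+1+1).choose 2) * gb q (M+1) (j+1)
          = z q ^ ((j+1+1).choose 2) * gb q M (j+1)
            + z q ^ ((j+1).choose 2 + (M+1)) * gb q M j := by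
      intro j hj
      rw [Finset.mem_range] at hj
      have hch : (j+1+1).choose 2 = (j+1).choose 2 + (j+1) := by
        rw [Nat.choose_succ_succ (j+1) 1, Nat.choose_one_right, Nat.add_comm]
      rw [pascal hq M j (by omega), mul_add, ← mul_assoc, ← pow_add]
      congr 3
      rw [hch]; omega
    rw [Finset.sum_congr rfl hstep, Finset.sum_add_distrib]
    have hsplit : ∑ j ∈ Finset.range (M+1), z q ^ ((j+1+1).choose 2) * gb q M (j+1)
        = ∑ j ∈ Finset.range M, z q ^ ((j+1+1).choose 2) * gb q M (j+1) := by
      rw [Finset.sum_range_succ, gb_of_gt M (M+1) (by omega), mul_zero, add_zero]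
    have hfirst : ∑ j ∈ Finset.range M, z q ^ ((j+1+1).choose 2) * gb q M (j+1) + (1:ℝ)
        = ∑ j ∈ Finset.range (M+1), z q ^ ((j+1).choose 2) * gb q M j := by
      rw [Finset.sum_range_succ' (fun j => z q ^ ((j+1).choose 2) * gb q M j) M]
      congr 1
      simp [gb_zero hq]
    have hsecond : ∑ j ∈ Finset.range (M+1), z q ^ ((j+1).choose 2 + (M+1)) * gb q M j
        = z q ^ (M+1) * ∑ j ∈ Finset.range (M+1), z q ^ ((j+1).choose 2) * gb q M j := by
      rw [Finset.mul_sum]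
      apply Finset.sum_congr rfl
      intro j _
      rw [pow_add]; ring
    rw [hsplit, hsecond]
    rw [← hfirst]
    ring


lemma le_choose2 (j : ℕ) : j ≤ (j+1).choose 2 := by
  cases j with
  | zero => simp
  | succ k =>
    rw [Nat.choose_succ_succ (k+1) 1, Nat.choose_one_right]
    omega

lemma half_pow_choose_le (j : ℕ) : ((1:ℝ)/2) ^ ((j+1).choose 2) ≤ (1/2)^j :=
  pow_le_pow_of_le_one (by norm_num) (by norm_num) (le_choose2 j)

lemma abs_a_le (hq : 2 ≤ q) (j : ℕ) : |a_ q j| ≤ (1/2)^j := by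
  rw [a_, abs_div, abs_of_pos (d_pos hq j)]
  calc |z q ^ ((j+1).choose 2)| / d q j ≤ |z q ^ ((j+1).choose 2)| :=
        div_le_self (abs_nonneg _) (one_le_d hq j)
  _ ≤ (1/2)^((j+1).choose 2) := abs_z_pow_le hq _
  _ ≤ (1/2)^j := half_pow_choose_le j

lemma summable_a (hq : 2 ≤ q) : Summable (a_ q) := by
  apply Summable.of_norm_bounded (g := fun j => (1/2:ℝ)^j)
    (summable_geometric_of_lt_one (by norm_num) (by norm_num))
  intro j
  rw [Real.norm_eq_abs]
  exact abs_a_le hq j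

lemma gb_tendsto (hq : 2 ≤ q) (j : ℕ) :
    Tendsto (fun M => gb q M j) atTop (𝓝 (1 / d q j)) := by
  have key : ∀ M, j ≤ M →
      gb q M j = (∏ i ∈ Finset.range j, (1 - z q ^ (M-j+i+1))) * (1 / d q j) := by
    intro M hjM
    have hd : d q M = d q (M-j) * ∏ i ∈ Finset.range j, (1 - z q ^ ((M-j)+i+1)) := by
      conv_lhs => rw [d, show M = (M-j) + j by omega, Finset.prod_range_add]
      rfl
    rw [gb_of_le M j hjM, hd]
    field_simp [d_ne_zero hq j, d_ne_zero hq (M-j)]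
  have hprod : Tendsto (fun M => ∏ i ∈ Finset.range j, (1 - z q ^ (M-j+i+1)))
      atTop (𝓝 (∏ i ∈ Finset.range j, (1:ℝ))) := by
    apply tendsto_finset_prod
    intro i _
    have hz0 : Tendsto (fun n : ℕ => z q ^ n) atTop (𝓝 0) := by
      apply tendsto_pow_atTop_nhds_zero_of_abs_lt_one
      calc |z q| ≤ 1/2 := abs_z_le hq
      _ < 1 := by norm_num
    have hcomp : Tendsto (fun M : ℕ => M - j + i + 1) atTop atTop := by
      apply tendsto_atTop_mono (fun M => show M - j ≤ M - j + i + 1 by omega)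
      exact tendsto_sub_atTop_nat j
    have := hz0.comp hcomp
    have h1 : Tendsto (fun M : ℕ => 1 - z q ^ (M-j+i+1)) atTop (𝓝 (1 - 0)) :=
      tendsto_const_nhds.sub this
    simpa using h1
  rw [Finset.prod_const_one] at hprod
  have : Tendsto (fun M => (∏ i ∈ Finset.range j, (1 - z q ^ (M-j+i+1))) * (1 / d q j))
      atTop (𝓝 (1 * (1 / d q j))) := hprod.mul_const _
  rw [one_mul] at this
  apply this.congr'
  filter_upwards [eventually_ge_atTop j] with M hM
  exact (key M hM).symm

theorem tendsto_partial_prod (hq : 2 ≤ q) :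
    Tendsto (fun M => ∏ i ∈ Finset.range M, (1 + z q ^ (i+1))) atTop (𝓝 (∑' j, a_ q j)) := by
  have htan : Tendsto (fun M => ∑' j, z q ^ ((j+1).choose 2) * gb q M j)
      atTop (𝓝 (∑' j, a_ q j)) := by
    apply tendsto_tsum_of_dominated_convergence
      (bound := fun j => 3 * (1/2:ℝ)^j)
    · exact (summable_geometric_of_lt_one (by norm_num) (by norm_num)).mul_left 3
    · intro j
      have := (gb_tendsto hq j).const_mul (z q ^ ((j+1).choose 2))
      rw [a_]
      simpa [mul_one_div, div_eq_mul_inv] using this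
    · apply Eventually.of_forall
      intro M j
      rw [Real.norm_eq_abs, abs_mul, abs_of_nonneg (gb_nonneg hq M j)]
      calc |z q ^ ((j+1).choose 2)| * gb q M j ≤ (1/2)^j * 3 := by
            apply mul_le_mul ((abs_z_pow_le hq _).trans (half_pow_choose_le j))
              (gb_le_three hq M j) (gb_nonneg hq M j) (by positivity)
      _ = 3 * (1/2)^j := by ring
  apply htan.congr
  intro M
  rw [tsum_eq_sum (s := Finset.range (M+1))]
  · exact (euler_finite hq M).symm
  · intro j hj
    rw [Finset.mem_range, not_lt] at hj
    rw [gb_of_gt M j (by omega), mul_zero]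

lemma one_add_z_pow_pos (hq : 2 ≤ q) (i : ℕ) : (0:ℝ) < 1 + z q ^ (i+1) := by
  have h := abs_le.mp (abs_z_pow_le hq (i+1))
  have : ((1:ℝ)/2)^(i+1) ≤ 1/2 := by
    calc ((1:ℝ)/2)^(i+1) ≤ (1/2)^1 := pow_le_pow_of_le_one (by norm_num) (by norm_num) (by omega)
    _ = 1/2 := by norm_num
  linarith [h.1]

lemma multipliable_prod (hq : 2 ≤ q) : Multipliable (fun i : ℕ => 1 + z q ^ (i+1)) := by
  have hlog : Summable (fun i : ℕ => Real.log (1 + z q ^ (i+1))) := by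
    apply Summable.of_norm_bounded (g := fun i => (1/2:ℝ)^i)
      (summable_geometric_of_lt_one (by norm_num) (by norm_num))
    intro i
    have habs : |(-(z q ^ (i+1)))| < 1 := by
      rw [abs_neg]
      calc |z q ^ (i+1)| ≤ (1/2)^(i+1) := abs_z_pow_le hq (i+1)
      _ < 1 := by
          apply lt_of_le_of_lt (pow_le_pow_of_le_one (by norm_num) (by norm_num)
            (show 1 ≤ i+1 by omega))
          norm_num
    have h := Real.abs_log_sub_add_sum_range_le habs 0
    simp only [Finset.range_zero, Finset.sum_empty, zero_add, abs_neg] at h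
    rw [sub_neg_eq_add, pow_one] at h
    rw [Real.norm_eq_abs]
    have hle : |z q ^ (i+1)| ≤ (1/2)^(i+1) := abs_z_pow_le hq (i+1)
    have hhalf : |z q ^ (i+1)| ≤ 1/2 := by
      calc |z q ^ (i+1)| ≤ (1/2)^(i+1) := hle
      _ ≤ (1/2)^1 := pow_le_pow_of_le_one (by norm_num) (by norm_num) (by omega)
      _ = 1/2 := by norm_num
    calc |Real.log (1 + z q ^ (i+1))| ≤ |z q ^ (i+1)| / (1 - |z q ^ (i+1)|) := h
    _ ≤ |z q ^ (i+1)| / (1/2) :=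
        div_le_div_of_nonneg_left (abs_nonneg _) (by norm_num) (by linarith)
    _ = 2 * |z q ^ (i+1)| := by ring
    _ ≤ 2 * (1/2)^(i+1) := by linarith
    _ = (1/2)^i := by ring
  exact Real.multipliable_of_summable_log (fun i => one_add_z_pow_pos hq i) hlog

theorem tprod_eq_tsum (hq : 2 ≤ q) :
    (∏' i : ℕ, (1 + z q ^ (i+1))) = ∑' j, a_ q j :=
  tendsto_nhds_unique ((multipliable_prod hq).hasProd.tendsto_prod_nat) (tendsto_partial_prod hq)


lemma choose2_succ (x : ℕ) : (x+1).choose 2 = x.choose 2 + x := by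
  rw [Nat.choose_succ_succ x 1, Nat.choose_one_right, Nat.add_comm]

lemma sum_range_choose2 (j : ℕ) : ∑ k ∈ Finset.range j, (k+1) = (j+1).choose 2 := by
  induction j with
  | zero => simp
  | succ j ih => rw [Finset.sum_range_succ, ih, choose2_succ (j+1)]

lemma choose2_add_le (N : ℕ) : ∀ j, (N+2).choose 2 + j ≤ (N+2+j).choose 2 := by
  intro j
  induction j with
  | zero => simp
  | succ j ih =>
    have : (N+2+(j+1)).choose 2 = (N+2+j).choose 2 + (N+2+j) := by
      rw [show N+2+(j+1) = (N+2+j)+1 by omega, choose2_succ]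
    omega

lemma d_mul_qpow (hq : 2 ≤ q) (j : ℕ) :
    d q j * q ^ ((j+1).choose 2) = ∏ k ∈ Finset.Icc 1 j, (q^k - (-1:ℝ)^k) := by
  have hq0 : q ≠ 0 := (q_pos hq).ne'
  rw [d, ← sum_range_choose2 j, ← Finset.prod_pow_eq_pow_sum, ← Finset.prod_mul_distrib]
  rw [← Finset.Ico_add_one_right_eq_Icc, Finset.prod_Ico_eq_prod_range,
    show j + 1 - 1 = j from rfl]
  apply Finset.prod_congr rfl
  intro k _
  have hzq : z q * q = -1 := by rw [z]; field_simp
  have : z q ^ (k+1) * q ^ (k+1) = (-1:ℝ)^(k+1) := by rw [← mul_pow, hzq]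
  calc (1 - z q ^ (k+1)) * q^(k+1) = q^(k+1) - z q ^(k+1) * q^(k+1) := by ring
  _ = q^(k+1) - (-1:ℝ)^(k+1) := by rw [this]
  _ = q^(1+k) - (-1:ℝ)^(1+k) := by rw [Nat.add_comm]


lemma a_eq (hq : 2 ≤ q) (j : ℕ) :
    a_ q j = (-1:ℝ)^((j+1).choose 2) / ∏ k ∈ Finset.Icc 1 j, (q^k - (-1:ℝ)^k) := by
  rw [← d_mul_qpow hq j, a_, z, neg_pow, div_pow, one_pow, one_div (q ^ ((j+1).choose 2))]
  have hq0 : q ≠ 0 := (q_pos hq).ne'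
  field_simp

lemma abs_a_le_q (hq : 2 ≤ q) (k : ℕ) : |a_ q k| ≤ 1 / q ^ ((k+1).choose 2) := by
  rw [a_, abs_div, abs_of_pos (d_pos hq k), abs_pow, abs_z hq, div_pow, one_pow]
  exact div_le_self (by positivity) (one_le_d hq k)

lemma qpow_ge (hq : 2 ≤ q) (N j : ℕ) :
    q ^ ((N+2).choose 2) * 2^j ≤ q ^ ((N+2+j).choose 2) := by
  have h := choose2_add_le N j
  calc q ^ ((N+2).choose 2) * 2^j ≤ q ^ ((N+2).choose 2) * q^j := by
        apply mul_le_mul_of_nonneg_left (pow_le_pow_left₀ (by norm_num) hq j) (by positivity)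
  _ = q ^ ((N+2).choose 2 + j) := by rw [pow_add]
  _ ≤ q ^ ((N+2+j).choose 2) := pow_le_pow_right₀ (by linarith) h

lemma bound_term_le (hq : 2 ≤ q) (N j : ℕ) :
    1 / q ^ ((N+1+j+1).choose 2) ≤ (1 / q ^ ((N+2).choose 2)) * (1/2)^j := by
  rw [show N+1+j+1 = N+2+j by omega]
  rw [div_pow, one_pow, div_mul_div_comm, one_mul,
    div_le_div_iff₀ (by positivity) (by positivity)]
  calc 1 * (q ^ ((N+2).choose 2) * 2^j) = q ^ ((N+2).choose 2) * 2^j := by ring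
  _ ≤ q ^ ((N+2+j).choose 2) := qpow_ge hq N j
  _ = q ^ ((N+2+j).choose 2) * 1 := by ring
  _ ≤ 1 * q ^ ((N+2+j).choose 2) := by rw [one_mul, mul_one]

lemma summable_bound (hq : 2 ≤ q) (N : ℕ) :
    Summable (fun j : ℕ => 1 / q ^ ((N+1+j+1).choose 2)) := by
  apply Summable.of_nonneg_of_le (fun j => by positivity) (fun j => bound_term_le hq N j)
  exact (summable_geometric_of_lt_one (by norm_num) (by norm_num)).mul_left _

lemma tsum_bound_le (hq : 2 ≤ q) (N : ℕ) :
    (∑' j : ℕ, 1 / q ^ ((N+1+j+1).choose 2)) ≤ 2 / q ^ ((N+2).choose 2) := by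
  calc (∑' j : ℕ, 1 / q ^ ((N+1+j+1).choose 2))
      ≤ ∑' j : ℕ, (1 / q ^ ((N+2).choose 2)) * (1/2)^j := by
        apply Summable.tsum_le_tsum (fun j => bound_term_le hq N j) (summable_bound hq N)
        exact (summable_geometric_of_lt_one (by norm_num) (by norm_num)).mul_left _
  _ = (1 / q ^ ((N+2).choose 2)) * ∑' j : ℕ, ((1:ℝ)/2)^j := tsum_mul_left
  _ = (1 / q ^ ((N+2).choose 2)) * 2 := by
        rw [tsum_geometric_of_lt_one (by norm_num) (by norm_num)]
        norm_num
  _ = 2 / q ^ ((N+2).choose 2) := by ring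

theorem main (q : ℝ) (hq : 2 ≤ q) (N : ℕ) :
    |(∏' i : ℕ, (1 + 1 / (-q) ^ (i + 1))) -
        ∑ j ∈ Finset.range (N + 1),
          (-1 : ℝ) ^ ((j + 1).choose 2) /
            ∏ k ∈ Finset.Icc 1 j, (q ^ k - (-1 : ℝ) ^ k)| ≤
      (∑' j : ℕ, 1 / q ^ ((N + 1 + j + 1).choose 2)) := by
  have hprod : (∏' i : ℕ, (1 + 1 / (-q) ^ (i + 1))) = ∏' i : ℕ, (1 + z q ^ (i+1)) := by
    apply tprod_congr
    intro i
    rw [one_div, ← inv_pow, inv_neg, z, one_div]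
  have hsum : (∑ j ∈ Finset.range (N + 1),
      (-1 : ℝ) ^ ((j + 1).choose 2) / ∏ k ∈ Finset.Icc 1 j, (q ^ k - (-1 : ℝ) ^ k))
      = ∑ j ∈ Finset.range (N+1), a_ q j :=
    (Finset.sum_congr rfl (fun j _ => (a_eq hq j))).symm
  rw [hprod, hsum, tprod_eq_tsum hq]
  have hkey := Summable.sum_add_tsum_nat_add (f := a_ q) (N+1) (summable_a hq)
  rw [← hkey, add_sub_cancel_left]
  have hshift : Summable (fun j : ℕ => a_ q (j + (N+1))) :=
    ((summable_nat_add_iff (N+1)).mpr (summable_a hq))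
  calc |∑' j : ℕ, a_ q (j + (N+1))| ≤ ∑' j : ℕ, |a_ q (j + (N+1))| := by
        have := norm_tsum_le_tsum_norm (f := fun j : ℕ => a_ q (j + (N+1))) ?_
        · simpa [Real.norm_eq_abs] using this
        · simpa [Real.norm_eq_abs] using hshift.abs
  _ ≤ ∑' j : ℕ, 1 / q ^ ((N+1+j+1).choose 2) := by
        apply Summable.tsum_le_tsum _ hshift.abs (summable_bound hq N)
        intro j
        calc |a_ q (j + (N+1))| ≤ 1 / q ^ ((j + (N+1) + 1).choose 2) := abs_a_le_q hq _
        _ = 1 / q ^ ((N+1+j+1).choose 2) := by rw [show j+(N+1)+1 = N+1+j+1 by omega]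


end UTEB


/-- For `q ≥ 2` and `n ≥ m ≥ 0`, the truncation error of the unitary Euler series
is at most `∑_{j ≥ n-m+1} q^{-\binom{j+1}{2}}`, which is at most `2 q^{-\binom{n-m+2}{2}}`. -/
theorem unitary_truncation_error_bound (q : ℝ) (hq : 2 ≤ q) (m n : ℕ) (hmn : m ≤ n) :
    |(∏' i : ℕ, (1 + 1 / (-q) ^ (i + 1))) -
        ∑ j ∈ Finset.range (n - m + 1),
          (-1 : ℝ) ^ ((j + 1).choose 2) /
            ∏ k ∈ Finset.Icc 1 j, (q ^ k - (-1 : ℝ) ^ k)| ≤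
      (∑' j : ℕ, 1 / q ^ ((n - m + 1 + j + 1).choose 2)) ∧
    (∑' j : ℕ, 1 / q ^ ((n - m + 1 + j + 1).choose 2)) ≤ 2 / q ^ ((n - m + 2).choose 2) := by
  exact ⟨UTEB.main q hq (n - m), UTEB.tsum_bound_le hq (n - m)⟩
end
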